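/- arXiv:2510.03676 — 6 statements merged into one kernel-verified Lean document; each statement's English description precedes it below -/
import Mathlib

section
/- Let d ≥ 2 and let 𝒢 be a set of bijections ℝ^d → ℝ^d that is closed under composition and under taking inverses. Suppose (C-UAP): for every orientation-preserving diffeomorphism g : ℝ^d → ℝ^d, every compact Ω ⊆ ℝ^d and every ε > 0 there exists φ ∈ 𝒢 with ‖g(x) − φ(x)‖ ≤ ε for all x ∈ Ω. Suppose also (local UIP): for every N ∈ ℕ there exist pairwise distinct points z₁,…,z_N ∈ ℝ^d and δ > 0 such that for all pairwise distinct z′₁,…,z′_N ∈ ℝ^d with ‖z′ᵢ − zᵢ‖ < δ for each i, there exists φ ∈ 𝒢 with φ(zᵢ) = z′ᵢ for all i. Then 𝒢 has the universal interpolation property: for every N ∈ ℕ and all pairwise distinct x₁,…,x_N ∈ ℝ^d and pairwise distinct y₁,…,y_N ∈ ℝ^d, there exists φ ∈ 𝒢 with φ(xᵢ) = yᵢ for all i. -/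
open scoped NNReal

noncomputable section

/-- `Euc d` is the Euclidean space `ℝ^d`. -/
abbrev Euc (d : ℕ) := EuclideanSpace ℝ (Fin d)

/-- An orientation-preserving diffeomorphism of `ℝ^d`: a bijection such that it and its inverse
are continuously differentiable, with everywhere positive Jacobian determinant. -/
def OrientationPreservingDiffeo {d : ℕ} (g : Euc d → Euc d) : Prop :=
  Function.Bijective g ∧
  ∃ ginv : Euc d → Euc d,
    Function.LeftInverse ginv g ∧ Function.RightInverse ginv g ∧
    ContDiff ℝ 1 g ∧ ContDiff ℝ 1 ginv ∧
    ∀ x, 0 < (fderiv ℝ g x).det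

lemma nat_cast_abs_ge_one {m n : ℕ} (h : m ≠ n) : (1:ℝ) ≤ |(m:ℝ) - n| := by
  have h1 : ((m:ℤ) - n) ≠ 0 := by
    intro hc
    exact h (Int.ofNat_inj.1 (by omega))
  have h2 : (1:ℤ) ≤ |(m:ℤ) - n| := Int.one_le_abs h1
  have h3 : ((|(m:ℤ) - n| : ℤ) : ℝ) = |(m:ℝ) - n| := by push_cast; rfl
  calc (1:ℝ) = ((1:ℤ):ℝ) := by norm_num
    _ ≤ ((|(m:ℤ) - n| : ℤ) : ℝ) := by exact_mod_cast h2
    _ = |(m:ℝ) - n| := h3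

lemma interp {M : ℕ} (r : Fin M → ℝ) (hr : Function.Injective r) (c : Fin M → ℝ) :
    ∃ h : ℝ → ℝ, ContDiff ℝ 1 h ∧ ∀ k, h (r k) = c k := by
  classical
  rcases Nat.lt_or_ge M 2 with hM | hM
  · refine ⟨fun _ => if hM0 : M = 0 then 0 else c ⟨0, by omega⟩, contDiff_const, ?_⟩
    intro k
    have hM0 : M ≠ 0 := by rintro rfl; exact absurd k.2 (by omega)
    simp only [dif_neg hM0]
    congr 1
    have hM1 : M = 1 := by omega
    subst hM1
    exact Subsingleton.elim _ _
  · set S : Finset ℝ :=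
      Finset.image (fun p : Fin M × Fin M => |r p.1 - r p.2|) Finset.univ.offDiag with hS
    have hSne : S.Nonempty := by
      refine ⟨|r ⟨0, by omega⟩ - r ⟨1, by omega⟩|, Finset.mem_image.2
        ⟨(⟨0, by omega⟩, ⟨1, by omega⟩), Finset.mem_offDiag.2
          ⟨Finset.mem_univ _, Finset.mem_univ _, ?_⟩, rfl⟩⟩
      intro hcontr
      have := congrArg Fin.val hcontr
      simp at this
    set ρ : ℝ := S.min' hSne with hρ
    have hρpos : 0 < ρ := by
      obtain ⟨p, hp, hpe⟩ := Finset.mem_image.1 (S.min'_mem hSne)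
      rw [Finset.mem_offDiag] at hp
      exact lt_of_lt_of_eq (abs_pos.2 (sub_ne_zero.2 fun he => hp.2.2 (hr he))) hpe
    have hρle : ∀ k l : Fin M, k ≠ l → ρ ≤ |r k - r l| := by
      intro k l hkl
      exact S.min'_le _ (Finset.mem_image.2 ⟨(k, l),
        Finset.mem_offDiag.2 ⟨Finset.mem_univ _, Finset.mem_univ _, hkl⟩, rfl⟩)
    have hbump : ∀ k : Fin M, ∃ f : ℝ → ℝ, ContDiff ℝ 1 f ∧ f (r k) = 1 ∧
        ∀ t : ℝ, ρ / 2 ≤ |t - r k| → f t = 0 := by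
      intro k
      let hb : ContDiffBump (r k) := ⟨ρ/3, ρ/2, by positivity, by linarith⟩
      have hrIn : hb.rIn = ρ/3 := rfl
      have hrOut : hb.rOut = ρ/2 := rfl
      refine ⟨hb, hb.contDiff, hb.one_of_mem_closedBall ?_, ?_⟩
      · simp only [Metric.mem_closedBall, dist_self, hrIn]; positivity
      · intro t ht
        exact hb.zero_of_le_dist (by rw [hrOut, Real.dist_eq]; exact ht)
    choose f hf1 hf2 hf3 using hbump
    refine ⟨fun t => ∑ k, c k * f k t, ?_, ?_⟩
    · exact ContDiff.sum fun k _ => contDiff_const.mul (hf1 k)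
    · intro l
      show (∑ k, c k * f k (r l)) = c l
      rw [Finset.sum_eq_single l]
      · rw [hf2 l, mul_one]
      · intro k _ hkl
        rw [hf3 k _ (by
          have := hρle l k hkl.symm
          have : ρ ≤ |r l - r k| := this
          linarith), mul_zero]
      · intro hl; exact absurd (Finset.mem_univ l) hl

lemma sep {N : ℕ} (a b : Fin N → ℝ) :
    ∃ h : ℝ → ℝ, ContDiff ℝ 1 h ∧
      ∀ i j : Fin N, b i ≠ b j → a i + h (b i) ≠ a j + h (b j) := by
  classical
  set s : Finset ℝ := Finset.image b Finset.univ with hs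
  set e : {v // v ∈ s} ≃ Fin s.card := s.equivFin with he
  set r : Fin s.card → ℝ := fun k => (e.symm k : ℝ) with hrdef
  have hr : Function.Injective r := by
    intro k1 k2 hk
    exact e.symm.injective (Subtype.coe_injective hk)
  set B : ℝ := 1 + ∑ i, 2 * |a i| with hB
  have hBgt : ∀ i j : Fin N, |a i - a j| < B := by
    intro i j
    have h1 : |a i| ≤ ∑ k, |a k| := Finset.single_le_sum (fun k _ => abs_nonneg (a k))
      (Finset.mem_univ i)
    have h2 : |a j| ≤ ∑ k, |a k| := Finset.single_le_sum (fun k _ => abs_nonneg (a k))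
      (Finset.mem_univ j)
    have h3 : |a i - a j| ≤ |a i| + |a j| := by
      rw [sub_eq_add_neg]
      exact (abs_add_le (a i) (-(a j))).trans (by rw [abs_neg])
    have h4 : ∑ k, 2 * |a k| = 2 * ∑ k, |a k| := by rw [Finset.mul_sum]
    rw [hB]; linarith
  obtain ⟨h, hh, hv⟩ := interp r hr (fun k => B * k)
  have hκmem : ∀ i, b i ∈ s := fun i => Finset.mem_image.2 ⟨i, Finset.mem_univ i, rfl⟩
  set κ : Fin N → Fin s.card := fun i => e ⟨b i, hκmem i⟩ with hκ
  have hbκ : ∀ i, r (κ i) = b i := by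
    intro i
    simp [hrdef, hκ]
  refine ⟨h, hh, ?_⟩
  intro i j hbij heq
  have hκij : κ i ≠ κ j := by
    intro hc
    exact hbij (by rw [← hbκ i, ← hbκ j, hc])
  have hi : h (b i) = B * κ i := by rw [← hbκ i, hv]
  have hj : h (b j) = B * κ j := by rw [← hbκ j, hv]
  rw [hi, hj] at heq
  have hBpos : 0 < B := by
    have : (0:ℝ) ≤ ∑ i, 2 * |a i| :=
      Finset.sum_nonneg fun i _ => by positivity
    have h4 : ∑ k, 2 * |a k| = 2 * ∑ k, |a k| := by rw [Finset.mul_sum]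
    rw [hB]; linarith
  have hvalne : (κ i : ℕ) ≠ (κ j : ℕ) := fun hc => hκij (Fin.val_injective hc)
  have h1 : (1:ℝ) ≤ |((κ j : ℕ):ℝ) - ((κ i : ℕ):ℝ)| := nat_cast_abs_ge_one (Ne.symm hvalne)
  have heq2 : a i - a j = B * (((κ j : ℕ):ℝ) - ((κ i : ℕ):ℝ)) := by
    rw [mul_sub]; linarith
  have : B ≤ |a i - a j| := by
    rw [heq2, abs_mul, abs_of_pos hBpos]
    nlinarith
  linarith [hBgt i j]

lemma shear_det {d : ℕ} (j m : Fin d) (hmj : m ≠ j) (h : ℝ → ℝ) (hh : ContDiff ℝ 1 h)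
    (x : Euc d) :
    0 < (fderiv ℝ (fun p : Euc d => p + h (p m) • EuclideanSpace.single j (1:ℝ)) x).det := by
  classical
  set c : Euc d := EuclideanSpace.single j (1:ℝ) with hc
  set dh : ℝ := deriv h (x m) with hdh
  set L : Euc d →L[ℝ] Euc d := ((dh) • (EuclideanSpace.proj m : Euc d →L[ℝ] ℝ)).smulRight c
    with hL
  have h0 : HasFDerivAt (fun p : Euc d => p m) (EuclideanSpace.proj m : Euc d →L[ℝ] ℝ) x :=
    (EuclideanSpace.proj m : Euc d →L[ℝ] ℝ).hasFDerivAt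
  have h1 : HasFDerivAt (fun p : Euc d => h (p m))
      ((dh) • (EuclideanSpace.proj m : Euc d →L[ℝ] ℝ)) x :=
    HasDerivAt.comp_hasFDerivAt x ((hh.differentiable one_ne_zero) (x m)).hasDerivAt h0
  have hder : HasFDerivAt (fun p : Euc d => p + h (p m) • c)
      (ContinuousLinearMap.id ℝ (Euc d) + L) x :=
    (hasFDerivAt_id x).add (h1.smul_const c)
  rw [hder.fderiv]
  have hLapp : ∀ (p : Euc d) (k : Fin d), (L p) k = (dh * p m) * (c k) := by
    intro p k
    simp [hL, smul_eq_mul]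
  have hdet : (ContinuousLinearMap.id ℝ (Euc d) + L).det = 1 := by
    show LinearMap.det _ = 1
    set b : Module.Basis (Fin d) ℝ (Euc d) := PiLp.basisFun 2 ℝ (Fin d) with hbdef
    rw [← LinearMap.det_toMatrix b]
    have hM : (LinearMap.toMatrix b b
        ((ContinuousLinearMap.id ℝ (Euc d) + L : Euc d →L[ℝ] Euc d) : Euc d →ₗ[ℝ] Euc d)) =
        1 + Matrix.replicateCol Unit (Pi.single j (1:ℝ)) *
          Matrix.replicateRow Unit (Pi.single m dh) := by
      ext k l
      rw [LinearMap.toMatrix_apply]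
      have hbl : ∀ k : Fin d, (b l : Euc d) k = if k = l then (1:ℝ) else 0 := by
        intro k
        rw [hbdef, PiLp.basisFun_apply, PiLp.single_apply]
      have hrepr : ∀ (y : Euc d), b.repr y k = y k := fun y => PiLp.basisFun_repr 2 ℝ _ y k
      rw [ContinuousLinearMap.coe_coe, ContinuousLinearMap.add_apply,
        ContinuousLinearMap.id_apply, hrepr, PiLp.add_apply, hLapp, hbl, hbl,
        Matrix.add_apply, Matrix.one_apply, Matrix.mul_apply, Fintype.sum_unique, Matrix.replicateCol_apply, Matrix.replicateRow_apply]
      have hck : c k = if k = j then (1:ℝ) else 0 := by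
        rw [hc, EuclideanSpace.single_apply]
      rw [hck, Pi.single_apply, Pi.single_apply]
      split_ifs <;> first | (exact absurd ‹l = m›.symm ‹¬m = l›) | (exact absurd ‹m = l›.symm ‹¬l = m›) | ring
    rw [hM, Matrix.det_one_add_replicateCol_mul_replicateRow]
    have hvu : dotProduct (Pi.single m dh) (Pi.single j (1:ℝ)) = 0 := by
      rw [dotProduct]
      apply Finset.sum_eq_zero
      intro k _
      rw [Pi.single_apply, Pi.single_apply]
      rcases eq_or_ne k m with rfl | hkm
      · simp [hmj]
      · simp [hkm]
    rw [hvu, add_zero]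
  rw [hdet]; norm_num

lemma coord_calc {d : ℕ} (j m : Fin d) (hmj : m ≠ j) (p : Euc d) (c : ℝ) :
    (p + c • EuclideanSpace.single j (1:ℝ)) m = p m := by
  simp [EuclideanSpace.single_apply, hmj]

lemma shear_apply {d : ℕ} (j k : Fin d) (p : Euc d) (c : ℝ) :
    (p + c • EuclideanSpace.single j (1:ℝ)) k = p k + c * (if k = j then 1 else 0) := by
  simp [EuclideanSpace.single_apply]

lemma shear_contDiff {d : ℕ} (j m : Fin d) (h : ℝ → ℝ) (hh : ContDiff ℝ 1 h) :
    ContDiff ℝ 1 (fun p : Euc d => p + h (p m) • EuclideanSpace.single j (1:ℝ)) :=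
  contDiff_id.add ((hh.comp (EuclideanSpace.proj m).contDiff).smul contDiff_const)

lemma shear_cancel {d : ℕ} (j m : Fin d) (hmj : m ≠ j) (h₁ h₂ : ℝ → ℝ)
    (hsum : ∀ t, h₁ t + h₂ t = 0) (p : Euc d) :
    (fun q : Euc d => q + h₂ (q m) • EuclideanSpace.single j (1:ℝ))
      ((fun q : Euc d => q + h₁ (q m) • EuclideanSpace.single j (1:ℝ)) p) = p := by
  simp only
  rw [coord_calc j m hmj, add_assoc, ← add_smul, hsum, zero_smul, add_zero]

lemma shear_pkg {d : ℕ} (j m : Fin d) (hmj : m ≠ j) (h : ℝ → ℝ) (hh : ContDiff ℝ 1 h) :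
    ∃ g gi : Euc d → Euc d, OrientationPreservingDiffeo g ∧ OrientationPreservingDiffeo gi ∧
      (∀ p, gi (g p) = p) ∧ (∀ p, g (gi p) = p) ∧
      (∀ p, g p = p + h (p m) • EuclideanSpace.single j (1:ℝ)) := by
  set g : Euc d → Euc d := fun p => p + h (p m) • EuclideanSpace.single j (1:ℝ) with hg
  set hneg : ℝ → ℝ := fun t => -(h t) with hneg_def
  set gi : Euc d → Euc d := fun p => p + hneg (p m) • EuclideanSpace.single j (1:ℝ) with hgi
  have hleft : ∀ p, gi (g p) = p :=
    fun p => shear_cancel j m hmj h hneg (fun t => by simp [hneg_def]) p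
  have hright : ∀ p, g (gi p) = p :=
    fun p => shear_cancel j m hmj hneg h (fun t => by simp [hneg_def]) p
  have hLI : Function.LeftInverse gi g := hleft
  have hRI : Function.RightInverse gi g := hright
  have hgOPD : OrientationPreservingDiffeo g :=
    ⟨⟨hLI.injective, hRI.surjective⟩, gi, hLI, hRI,
      shear_contDiff j m h hh, shear_contDiff j m hneg hh.neg,
      shear_det j m hmj h hh⟩
  have hgiOPD : OrientationPreservingDiffeo gi :=
    ⟨⟨Function.LeftInverse.injective (f := gi) (g := g) hright,
      Function.RightInverse.surjective (f := gi) (g := g) hleft⟩, g, hright, hleft,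
      shear_contDiff j m hneg hh.neg, shear_contDiff j m h hh,
      shear_det j m hmj hneg hh.neg⟩
  exact ⟨g, gi, hgOPD, hgiOPD, hleft, hright, fun p => rfl⟩

lemma shear_set {d N : ℕ} (j m : Fin d) (hmj : m ≠ j) (x : Fin N → Euc d)
    (hinj : Function.Injective fun i => x i m) (t : Fin N → ℝ) :
    ∃ g gi : Euc d → Euc d, OrientationPreservingDiffeo g ∧ OrientationPreservingDiffeo gi ∧
      (∀ p, gi (g p) = p) ∧ (∀ i, g (x i) j = t i) ∧ ∀ i k, k ≠ j → g (x i) k = x i k := by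
  obtain ⟨h, hh, hv⟩ := interp (fun i => x i m) hinj (fun i => t i - x i j)
  obtain ⟨g, gi, hgO, hgiO, hl, _, hform⟩ := shear_pkg j m hmj h hh
  refine ⟨g, gi, hgO, hgiO, hl, ?_, ?_⟩
  · intro i
    rw [hform, shear_apply, hv i]
    simp
  · intro i k hkj
    rw [hform, shear_apply]
    simp [hkj]

def fcomp {d : ℕ} (L : List (Euc d → Euc d)) : Euc d → Euc d := L.foldr (· ∘ ·) id

lemma fcomp_nil {d : ℕ} (p : Euc d) : fcomp [] p = p := rfl

lemma fcomp_cons {d : ℕ} (g : Euc d → Euc d) (L : List (Euc d → Euc d)) (p : Euc d) :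
    fcomp (g :: L) p = g (fcomp L p) := rfl

lemma fcomp_append {d : ℕ} (L₁ L₂ : List (Euc d → Euc d)) (p : Euc d) :
    fcomp (L₁ ++ L₂) p = fcomp L₁ (fcomp L₂ p) := by
  induction L₁ with
  | nil => rfl
  | cons g L ih => rw [List.cons_append, fcomp_cons, ih, fcomp_cons]

lemma stageA {d N : ℕ} (hd1 : 0 < d) (x : Fin N → Euc d) (hx : Function.Injective x) :
    ∃ L L' : List (Euc d → Euc d),
      (∀ g ∈ L, OrientationPreservingDiffeo g) ∧ (∀ g ∈ L', OrientationPreservingDiffeo g) ∧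
      (∀ p, fcomp L' (fcomp L p) = p) ∧
      (∀ i k, k ≠ (⟨0, hd1⟩ : Fin d) → fcomp L (x i) k = x i k) ∧
      Function.Injective (fun i => fcomp L (x i) (⟨0, hd1⟩ : Fin d)) := by
  set j0 : Fin d := ⟨0, hd1⟩ with hj0
  have key : ∀ m : ℕ, ∃ L L' : List (Euc d → Euc d),
      (∀ g ∈ L, OrientationPreservingDiffeo g) ∧ (∀ g ∈ L', OrientationPreservingDiffeo g) ∧
      (∀ p, fcomp L' (fcomp L p) = p) ∧
      (∀ i k, k ≠ j0 → fcomp L (x i) k = x i k) ∧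
      (∀ i i', fcomp L (x i) j0 = fcomp L (x i') j0 →
        ∀ k : Fin d, (k : ℕ) ≤ m → x i k = x i' k) := by
    intro m
    induction m with
    | zero =>
      refine ⟨[], [], by simp, by simp, fun p => rfl, fun i k _ => rfl, ?_⟩
      intro i i' heq k hk
      have hk0 : k = j0 := Fin.ext (Nat.le_zero.1 hk)
      rw [hk0]
      exact heq
    | succ m ih =>
      obtain ⟨L, L', hLO, hL'O, hinv, hpres, hsep0⟩ := ih
      by_cases hmd : m + 1 < d
      · set μ : Fin d := ⟨m + 1, hmd⟩ with hμ
        have hμ0 : μ ≠ j0 := by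
          intro hc
          exact absurd (congrArg Fin.val hc) (show ¬(m+1) = 0 by omega)
        obtain ⟨h, hh, hsep⟩ := sep (fun i => fcomp L (x i) j0) (fun i => x i μ)
        obtain ⟨g, gi, hgO, hgiO, hl, _, hform⟩ := shear_pkg j0 μ hμ0 h hh
        have happly : ∀ i, fcomp (g :: L) (x i) = fcomp L (x i) +
            h (x i μ) • EuclideanSpace.single j0 (1:ℝ) := by
          intro i
          rw [fcomp_cons, hform, hpres i μ hμ0]
        refine ⟨g :: L, L' ++ [gi], ?_, ?_, ?_, ?_, ?_⟩
        · intro g' hg'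
          rcases List.mem_cons.1 hg' with rfl | hm
          · exact hgO
          · exact hLO g' hm
        · intro g' hg'
          rcases List.mem_append.1 hg' with hm | hm
          · exact hL'O g' hm
          · rw [List.mem_singleton.1 hm]; exact hgiO
        · intro p
          rw [fcomp_cons, fcomp_append]
          show fcomp L' (fcomp [gi] (g (fcomp L p))) = p
          rw [show fcomp [gi] (g (fcomp L p)) = gi (g (fcomp L p)) from rfl, hl]
          exact hinv p
        · intro i k hk
          rw [happly i, shear_apply, if_neg hk, mul_zero, add_zero]
          exact hpres i k hk
        · intro i i' heq k hk
          rw [happly i, happly i', shear_apply, shear_apply, if_pos rfl,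
            mul_one, mul_one] at heq
          rcases eq_or_ne (x i μ) (x i' μ) with hbe | hbe
          · have haeq : fcomp L (x i) j0 = fcomp L (x i') j0 := by
              rw [hbe] at heq
              linarith
            by_cases hkm : (k : ℕ) ≤ m
            · exact hsep0 i i' haeq k hkm
            · have hkμ : k = μ := Fin.ext (show (k:ℕ) = m + 1 by omega)
              rw [hkμ]
              exact hbe
          · exact absurd heq (hsep i i' hbe)
      · refine ⟨L, L', hLO, hL'O, hinv, hpres, ?_⟩
        intro i i' heq k hk
        exact hsep0 i i' heq k (by omega)
  obtain ⟨L, L', hLO, hL'O, hinv, hpres, hsep0⟩ := key (d - 1)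
  refine ⟨L, L', hLO, hL'O, hinv, hpres, ?_⟩
  intro i i' heq
  apply hx
  ext k
  exact hsep0 i i' heq k (by omega)

lemma reach {d N : ℕ} (hd : 2 ≤ d) (x : Fin N → Euc d) (hx : Function.Injective x) :
    ∃ L L' : List (Euc d → Euc d),
      (∀ g ∈ L, OrientationPreservingDiffeo g) ∧ (∀ g ∈ L', OrientationPreservingDiffeo g) ∧
      (∀ p, fcomp L' (fcomp L p) = p) ∧
      ∀ i, fcomp L (x i) =
        (((i : ℕ) : ℝ) + 1) • EuclideanSpace.single (⟨0, by omega⟩ : Fin d) (1:ℝ) := by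
  have hd1 : 0 < d := by omega
  have hd2 : 1 < d := by omega
  set j0 : Fin d := ⟨0, hd1⟩ with hj0
  set j1 : Fin d := ⟨1, hd2⟩ with hj1
  have hj10 : j1 ≠ j0 := fun hc => absurd (congrArg Fin.val hc) (show ¬(1=0) by omega)
  have hj01 : j0 ≠ j1 := fun hc => absurd (congrArg Fin.val hc) (show ¬(0=1) by omega)
  obtain ⟨L1, L1', hL1, hL1', hinv1, hpres1, hinj1⟩ := stageA hd1 x hx
  set x1 : Fin N → Euc d := fun i => fcomp L1 (x i) with hx1
  obtain ⟨g2, gi2, hg2, hgi2, hl2, hBset, hBpres⟩ :=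
    shear_set j1 j0 hj01 x1 hinj1 (fun i => ((i : ℕ) : ℝ) + 1)
  set x2 : Fin N → Euc d := fun i => g2 (x1 i) with hx2
  have hinj2 : Function.Injective fun i => x2 i j1 := by
    intro i i' he
    simp only [hx2] at he
    rw [hBset i, hBset i'] at he
    have hcast : ((i:ℕ):ℝ) = ((i':ℕ):ℝ) := by linarith
    exact Fin.ext (Nat.cast_injective hcast)
  obtain ⟨g3, gi3, hg3, hgi3, hl3, hCset, hCpres⟩ :=
    shear_set j0 j1 hj10 x2 hinj2 (fun i => ((i : ℕ) : ℝ) + 1)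
  set x3 : Fin N → Euc d := fun i => g3 (x2 i) with hx3
  have hx3j0 : ∀ i, x3 i j0 = ((i : ℕ) : ℝ) + 1 := hCset
  have keyD : ∀ m : ℕ, ∃ L L' : List (Euc d → Euc d),
      (∀ g ∈ L, OrientationPreservingDiffeo g) ∧ (∀ g ∈ L', OrientationPreservingDiffeo g) ∧
      (∀ p, fcomp L' (fcomp L p) = p) ∧
      (∀ i, fcomp L (x3 i) j0 = ((i : ℕ) : ℝ) + 1) ∧
      (∀ i k, k ≠ j0 → ((k : ℕ) ≤ m → fcomp L (x3 i) k = 0) ∧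
        ((k : ℕ) > m → fcomp L (x3 i) k = x3 i k)) := by
    intro m
    induction m with
    | zero =>
      refine ⟨[], [], by simp, by simp, fun p => rfl, hx3j0, ?_⟩
      intro i k hkj0
      constructor
      · intro hk
        exact absurd (Fin.ext (Nat.le_zero.1 hk)) hkj0
      · intro _
        rfl
    | succ m ih =>
      obtain ⟨L, L', hLO, hL'O, hinv, hj0eq, hcoords⟩ := ih
      by_cases hmd : m + 1 < d
      · set μ : Fin d := ⟨m + 1, hmd⟩ with hμ
        have hμ0 : μ ≠ j0 := fun hc => absurd (congrArg Fin.val hc) (show ¬(m+1=0) by omega)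
        have h0μ : j0 ≠ μ := fun hc => absurd (congrArg Fin.val hc) (show ¬(0=m+1) by omega)
        have hyinj : Function.Injective fun i => fcomp L (x3 i) j0 := by
          intro i i' he
          simp only [hj0eq i, hj0eq i'] at he
          have hcast : ((i:ℕ):ℝ) = ((i':ℕ):ℝ) := by linarith
          exact Fin.ext (Nat.cast_injective hcast)
        obtain ⟨g4, gi4, hg4, hgi4, hl4, hDset, hDpres⟩ :=
          shear_set μ j0 h0μ (fun i => fcomp L (x3 i)) hyinj (fun _ => 0)
        refine ⟨g4 :: L, L' ++ [gi4], ?_, ?_, ?_, ?_, ?_⟩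
        · intro g' hg'
          rcases List.mem_cons.1 hg' with rfl | hm
          · exact hg4
          · exact hLO g' hm
        · intro g' hg'
          rcases List.mem_append.1 hg' with hm | hm
          · exact hL'O g' hm
          · rw [List.mem_singleton.1 hm]; exact hgi4
        · intro p
          rw [fcomp_cons, fcomp_append]
          rw [show fcomp [gi4] (g4 (fcomp L p)) = gi4 (g4 (fcomp L p)) from rfl, hl4]
          exact hinv p
        · intro i
          rw [fcomp_cons, hDpres i j0 hμ0.symm]  -- careful: hDpres needs k ≠ j where j = μ
          exact hj0eq i
        · intro i k hkj0
          constructor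
          · intro hk
            rcases eq_or_ne k μ with rfl | hkμ
            · rw [fcomp_cons]
              exact hDset i
            · rw [fcomp_cons, hDpres i k hkμ]
              exact (hcoords i k hkj0).1 (by
                have : (k:ℕ) ≠ m + 1 := fun hc => hkμ (Fin.ext hc)
                omega)
          · intro hk
            have hkμ : k ≠ μ := fun hc => by
              rw [hc] at hk
              exact absurd hk (by simp [hμ])
            rw [fcomp_cons, hDpres i k hkμ]
            exact (hcoords i k hkj0).2 (by omega)
      · refine ⟨L, L', hLO, hL'O, hinv, hj0eq, ?_⟩
        intro i k hkj0
        refine ⟨fun _ => (hcoords i k hkj0).1 (by omega), fun hk => ?_⟩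
        exact absurd hk (by omega)
  obtain ⟨LD, LD', hLD, hLD', hinvD, hDj0, hDcoords⟩ := keyD (d - 1)
  refine ⟨LD ++ (g3 :: (g2 :: L1)), (L1' ++ [gi2, gi3]) ++ LD', ?_, ?_, ?_, ?_⟩
  · intro g' hg'
    rcases List.mem_append.1 hg' with hm | hm
    · exact hLD g' hm
    · rcases List.mem_cons.1 hm with rfl | hm
      · exact hg3
      · rcases List.mem_cons.1 hm with rfl | hm
        · exact hg2
        · exact hL1 g' hm
  · intro g' hg'
    rcases List.mem_append.1 hg' with hm | hm
    · rcases List.mem_append.1 hm with hm | hm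
      · exact hL1' g' hm
      · rcases List.mem_cons.1 hm with rfl | hm
        · exact hgi2
        · rw [List.mem_singleton.1 hm]; exact hgi3
    · exact hLD' g' hm
  · intro p
    rw [show fcomp (LD ++ (g3 :: (g2 :: L1))) p = fcomp LD (fcomp (g3 :: (g2 :: L1)) p) from
      fcomp_append _ _ _]
    rw [fcomp_append, fcomp_append, hinvD]
    rw [show fcomp (g3 :: (g2 :: L1)) p = g3 (g2 (fcomp L1 p)) from rfl]
    rw [show fcomp [gi2, gi3] (g3 (g2 (fcomp L1 p))) = gi2 (gi3 (g3 (g2 (fcomp L1 p)))) from rfl]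
    rw [hl3, hl2]
    exact hinv1 p
  · intro i
    have hform : fcomp (LD ++ (g3 :: (g2 :: L1))) (x i) = fcomp LD (x3 i) := by
      rw [fcomp_append, fcomp_cons, fcomp_cons]
    rw [hform]
    ext k
    have hrhs : ((((i : ℕ) : ℝ) + 1) • EuclideanSpace.single (⟨0, by omega⟩ : Fin d) (1:ℝ)) k
        = (((i : ℕ) : ℝ) + 1) * (if k = j0 then 1 else 0) := by
      simp [EuclideanSpace.single_apply, hj0]
    rw [hrhs]
    rcases eq_or_ne k j0 with rfl | hkj0
    · rw [if_pos rfl, mul_one]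
      exact hDj0 i
    · rw [if_neg hkj0, mul_zero]
      exact (hDcoords i k hkj0).1 (by omega)

lemma reach2 {d N : ℕ} (hd : 2 ≤ d) (x z : Fin N → Euc d) (hx : Function.Injective x)
    (hz : Function.Injective z) :
    ∃ L : List (Euc d → Euc d), (∀ g ∈ L, OrientationPreservingDiffeo g) ∧
      ∀ i, fcomp L (x i) = z i := by
  obtain ⟨Lx, _, hLx, _, _, hwx⟩ := reach hd x hx
  obtain ⟨Lz, Lz', hLz, hLz', hinvz, hwz⟩ := reach hd z hz
  refine ⟨Lz' ++ Lx, ?_, ?_⟩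
  · intro g hg
    rcases List.mem_append.1 hg with hm | hm
    · exact hLz' g hm
    · exact hLx g hm
  · intro i
    rw [fcomp_append, hwx i, ← hwz i]
    exact hinvz (z i)

lemma opd_id {d : ℕ} : OrientationPreservingDiffeo (id : Euc d → Euc d) := by
  refine ⟨Function.bijective_id, id, fun p => rfl, fun p => rfl, contDiff_id, contDiff_id, ?_⟩
  intro x
  rw [fderiv_id]
  have : (ContinuousLinearMap.id ℝ (Euc d)).det = 1 := by
    show LinearMap.det _ = 1
    rw [ContinuousLinearMap.coe_id, LinearMap.det_id]
  rw [this]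
  norm_num

lemma approx {d N : ℕ} (𝒢 : Set (Euc d → Euc d))
    (hcomp : ∀ φ ∈ 𝒢, ∀ ψ ∈ 𝒢, φ ∘ ψ ∈ 𝒢)
    (hCUAP : ∀ g : Euc d → Euc d, OrientationPreservingDiffeo g →
      ∀ Ω : Set (Euc d), IsCompact Ω → ∀ ε : ℝ, 0 < ε →
        ∃ φ ∈ 𝒢, ∀ x ∈ Ω, ‖g x - φ x‖ ≤ ε)
    (pts : Fin N → Euc d) (L : List (Euc d → Euc d))
    (hL : ∀ g ∈ L, OrientationPreservingDiffeo g) :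
    ∀ ε : ℝ, 0 < ε → ∃ φ ∈ 𝒢, ∀ i, ‖fcomp L (pts i) - φ (pts i)‖ ≤ ε := by
  induction L with
  | nil =>
    intro ε hε
    obtain ⟨φ, hφ, hap⟩ := hCUAP id opd_id (Set.range pts) (Set.finite_range pts).isCompact ε hε
    exact ⟨φ, hφ, fun i => hap (pts i) ⟨i, rfl⟩⟩
  | cons g L ih =>
    intro ε hε
    have hgO : OrientationPreservingDiffeo g := hL g List.mem_cons_self
    have hL' : ∀ g' ∈ L, OrientationPreservingDiffeo g' :=
      fun g' h => hL g' (List.mem_cons_of_mem _ h)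
    have ihL := ih hL'
    rcases Nat.eq_zero_or_pos N with rfl | hN
    · obtain ⟨φ, hφ, _⟩ := ihL ε hε
      exact ⟨φ, hφ, fun i => i.elim0⟩
    · have hgcont : Continuous g := by
        obtain ⟨_, _, _, _, hgC, _, _⟩ := hgO
        exact hgC.continuous
      have hδex : ∀ i : Fin N, ∃ δ : ℝ, 0 < δ ∧ ∀ y : Euc d,
          dist y (fcomp L (pts i)) < δ → dist (g y) (g (fcomp L (pts i))) < ε/2 := by
        intro i
        obtain ⟨δ, hδpos, hδ⟩ :=
          Metric.continuousAt_iff.1 (hgcont.continuousAt (x := fcomp L (pts i)))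
            (ε/2) (half_pos hε)
        exact ⟨δ, hδpos, fun y hy => hδ hy⟩
      choose δ hδpos hδ using hδex
      haveI : Nonempty (Fin N) := ⟨⟨0, hN⟩⟩
      set δ' : ℝ := Finset.univ.inf' Finset.univ_nonempty δ with hδ'
      have hδ'pos : 0 < δ' := by
        rw [hδ', Finset.lt_inf'_iff]
        intro i _
        exact hδpos i
      obtain ⟨ψ, hψ, hψap⟩ := ihL (δ'/2) (by linarith)
      obtain ⟨φ₂, hφ₂, hap₂⟩ := hCUAP g hgO (Set.range fun i => ψ (pts i))
        (Set.finite_range _).isCompact (ε/2) (by linarith)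
      refine ⟨φ₂ ∘ ψ, hcomp φ₂ hφ₂ ψ hψ, fun i => ?_⟩
      have h1 : dist (ψ (pts i)) (fcomp L (pts i)) < δ i := by
        rw [dist_eq_norm, norm_sub_rev]
        calc ‖fcomp L (pts i) - ψ (pts i)‖ ≤ δ'/2 := hψap i
          _ < δ' := by linarith
          _ ≤ δ i := Finset.inf'_le _ (Finset.mem_univ i)
      have h2 : dist (g (ψ (pts i))) (g (fcomp L (pts i))) < ε/2 := hδ i _ h1
      have h3 : ‖g (ψ (pts i)) - φ₂ (ψ (pts i))‖ ≤ ε/2 := hap₂ (ψ (pts i)) ⟨i, rfl⟩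
      rw [fcomp_cons]
      rw [show (φ₂ ∘ ψ) (pts i) = φ₂ (ψ (pts i)) from rfl]
      calc ‖g (fcomp L (pts i)) - φ₂ (ψ (pts i))‖
          ≤ ‖g (fcomp L (pts i)) - g (ψ (pts i))‖ + ‖g (ψ (pts i)) - φ₂ (ψ (pts i))‖ := by
            have := norm_sub_le_norm_sub_add_norm_sub (g (fcomp L (pts i))) (g (ψ (pts i)))
              (φ₂ (ψ (pts i)))
            exact this
        _ ≤ ε/2 + ε/2 := by
            refine add_le_add ?_ h3
            rw [← dist_eq_norm, dist_comm]
            exact h2.le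
        _ = ε := by ring

/-- for a family `𝒢` of bijections of `ℝ^d` (`d ≥ 2`) closed under composition and
inverses, the uniform universal approximation property for orientation-preserving
diffeomorphisms together with the local universal interpolation property implies the universal
interpolation property. -/
theorem uip_of_cuap_and_localUIP
    (d : ℕ) (hd : 2 ≤ d) (𝒢 : Set (Euc d → Euc d))
    (hbij : ∀ φ ∈ 𝒢, Function.Bijective φ)
    (hcomp : ∀ φ ∈ 𝒢, ∀ ψ ∈ 𝒢, φ ∘ ψ ∈ 𝒢)
    (hinv : ∀ φ ∈ 𝒢, ∃ ψ ∈ 𝒢, Function.LeftInverse ψ φ ∧ Function.RightInverse ψ φ)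
    (hCUAP : ∀ g : Euc d → Euc d, OrientationPreservingDiffeo g →
      ∀ Ω : Set (Euc d), IsCompact Ω → ∀ ε : ℝ, 0 < ε →
        ∃ φ ∈ 𝒢, ∀ x ∈ Ω, ‖g x - φ x‖ ≤ ε)
    (hlocalUIP : ∀ N : ℕ, ∃ (z : Fin N → Euc d) (δ : ℝ), Function.Injective z ∧ 0 < δ ∧
      ∀ z' : Fin N → Euc d, Function.Injective z' → (∀ i, ‖z' i - z i‖ < δ) →
        ∃ φ ∈ 𝒢, ∀ i, φ (z i) = z' i)
    (N : ℕ) (x y : Fin N → Euc d)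
    (hx : Function.Injective x) (hy : Function.Injective y) :
    ∃ φ ∈ 𝒢, ∀ i, φ (x i) = y i := by
  obtain ⟨z, δ, hzinj, hδpos, hloc⟩ := hlocalUIP N
  -- transport x close to z
  have hnear : ∀ (v : Fin N → Euc d), Function.Injective v →
      ∃ ψ ∈ 𝒢, ∀ i, ‖ψ (v i) - z i‖ < δ := by
    intro v hv
    obtain ⟨L, hLO, hLz⟩ := reach2 hd v z hv hzinj
    obtain ⟨ψ, hψ, hψap⟩ := approx 𝒢 hcomp hCUAP v L hLO (δ/2) (by linarith)
    refine ⟨ψ, hψ, fun i => ?_⟩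
    calc ‖ψ (v i) - z i‖ = ‖fcomp L (v i) - ψ (v i)‖ := by
          rw [hLz i, norm_sub_rev]
      _ ≤ δ/2 := hψap i
      _ < δ := by linarith
  obtain ⟨ψ₁, hψ₁, hψ₁near⟩ := hnear x hx
  obtain ⟨ψ₂, hψ₂, hψ₂near⟩ := hnear y hy
  have hψ₁inj : Function.Injective fun i => ψ₁ (x i) := (hbij ψ₁ hψ₁).1.comp hx
  have hψ₂inj : Function.Injective fun i => ψ₂ (y i) := (hbij ψ₂ hψ₂).1.comp hy
  obtain ⟨φ₁, hφ₁, hφ₁eq⟩ := hloc (fun i => ψ₁ (x i)) hψ₁inj hψ₁near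
  obtain ⟨φ₂, hφ₂, hφ₂eq⟩ := hloc (fun i => ψ₂ (y i)) hψ₂inj hψ₂near
  obtain ⟨φ₁', hφ₁', hφ₁'l, _⟩ := hinv φ₁ hφ₁
  obtain ⟨ψ₂', hψ₂', hψ₂'l, _⟩ := hinv ψ₂ hψ₂
  refine ⟨ψ₂' ∘ (φ₂ ∘ (φ₁' ∘ ψ₁)),
    hcomp ψ₂' hψ₂' _ (hcomp φ₂ hφ₂ _ (hcomp φ₁' hφ₁' ψ₁ hψ₁)), fun i => ?_⟩
  show ψ₂' (φ₂ (φ₁' (ψ₁ (x i)))) = y i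
  have h1 : φ₁' (ψ₁ (x i)) = z i := by
    rw [← hφ₁eq i]
    exact hφ₁'l (z i)
  rw [h1, hφ₂eq i]
  exact hψ₂'l (y i)
end
end

section
/- Let d ≥ 1, n ≥ 1, let D₁, …, Dₙ ⊆ ℝ^d be open sets, and for each i let Fᵢ : Dᵢ → ℝ^d be continuous with Fᵢ(Dᵢ) ⊆ D_{i+1} for i < n; set T = Fₙ ∘ ⋯ ∘ F₁ : D₁ → ℝ^d. Let ℱ be a set of continuous functions ℝ^d → ℝ^d such that for each i ∈ {1,…,n}, every compact set Kᵢ ⊆ Dᵢ and every δ > 0, there exists h ∈ ℱ with ‖Fᵢ(x) − h(x)‖ ≤ δ for all x ∈ Kᵢ. Then for every compact set K ⊆ D₁ and every ε > 0, there exist functions h₁, …, hₙ ∈ ℱ such that ‖T(x) − hₙ ∘ ⋯ ∘ h₁(x)‖ ≤ ε for all x ∈ K. -/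
noncomputable section

/-- `compChain F n = F (n-1) ∘ ⋯ ∘ F 0`. -/
def compChain {α : Type*} (F : ℕ → α → α) : ℕ → α → α
  | 0 => id
  | (k + 1) => F k ∘ compChain F k

lemma compChain_congr {α : Type*} {f g : ℕ → α → α} :
    ∀ n, (∀ i < n, f i = g i) → compChain f n = compChain g n
  | 0, _ => rfl
  | (k+1), h => by
      simp only [compChain, compChain_congr k (fun i hi => h i (Nat.lt_succ_of_lt hi)),
        h k (Nat.lt_succ_self k)]

lemma chain_mapsTo {d : ℕ} {D : ℕ → Set (Euc d)} {F : ℕ → Euc d → Euc d} :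
    ∀ k, (∀ i < k, Set.MapsTo (F i) (D i) (D (i+1))) →
      Set.MapsTo (compChain F k) (D 0) (D k)
  | 0, _ => fun _ hx => hx
  | (k+1), h =>
      (h k (Nat.lt_succ_self k)).comp
        (chain_mapsTo k (fun i hi => h i (Nat.lt_succ_of_lt hi)))

lemma chain_contOn {d : ℕ} {D : ℕ → Set (Euc d)} {F : ℕ → Euc d → Euc d} :
    ∀ k, (∀ i < k, Set.MapsTo (F i) (D i) (D (i+1))) →
      (∀ i < k, ContinuousOn (F i) (D i)) →
      ContinuousOn (compChain F k) (D 0)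
  | 0, _, _ => continuousOn_id
  | (k+1), hm, hc =>
      (hc k (Nat.lt_succ_self k)).comp
        (chain_contOn k (fun i hi => hm i (Nat.lt_succ_of_lt hi))
          (fun i hi => hc i (Nat.lt_succ_of_lt hi)))
        (chain_mapsTo k (fun i hi => hm i (Nat.lt_succ_of_lt hi)))

lemma main_aux {d : ℕ} :
    ∀ n, ∀ (D : ℕ → Set (Euc d)) (F : ℕ → Euc d → Euc d),
    (∀ i < n, IsOpen (D i)) → (∀ i < n, ContinuousOn (F i) (D i)) →
    (∀ i, i + 1 < n → Set.MapsTo (F i) (D i) (D (i + 1))) →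
    ∀ ℱ : Set (Euc d → Euc d),
    (∀ i < n, ∀ K : Set (Euc d), K ⊆ D i → IsCompact K → ∀ δ : ℝ, 0 < δ →
      ∃ h ∈ ℱ, ∀ x ∈ K, ‖F i x - h x‖ ≤ δ) →
    ∀ K : Set (Euc d), K ⊆ D 0 → IsCompact K → ∀ ε : ℝ, 0 < ε →
    ∃ h : ℕ → Euc d → Euc d, (∀ i < n, h i ∈ ℱ) ∧
      ∀ x ∈ K, ‖compChain F n x - compChain h n x‖ ≤ ε := by
  intro n
  induction n with
  | zero =>
      intro D F _ _ _ ℱ _ K _ _ ε hε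
      exact ⟨fun _ => id, fun i hi => absurd hi (Nat.not_lt_zero i),
        fun x _ => by simp [compChain]; linarith⟩
  | succ n ih =>
      intro D F hopen hcont hmaps ℱ happrox K hK hKc ε hε
      rcases Nat.eq_zero_or_pos n with rfl | hn
      · obtain ⟨h0, h0F, h0ap⟩ := happrox 0 (by omega) K hK hKc ε hε
        refine ⟨fun _ => h0, fun i _ => h0F, fun x hx => ?_⟩
        simpa [compChain] using h0ap x hx
      · -- inductive step
        have hmaps' : ∀ i < n, Set.MapsTo (F i) (D i) (D (i+1)) :=
          fun i hi => hmaps i (by omega)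
        have hcont' : ∀ i < n, ContinuousOn (F i) (D i) :=
          fun i hi => hcont i (by omega)
        have hopen' : ∀ i < n, IsOpen (D i) := fun i hi => hopen i (by omega)
        set K' : Set (Euc d) := compChain F n '' K with hK'def
        have hK'sub : K' ⊆ D n := fun y ⟨x, hx, hxy⟩ =>
          hxy ▸ chain_mapsTo n hmaps' (hK hx)
        have hK'c : IsCompact K' :=
          hKc.image_of_continuousOn ((chain_contOn n hmaps' hcont').mono hK)
        obtain ⟨r, hr, hrsub⟩ :=
          hK'c.exists_cthickening_subset_open (hopen n (by omega)) hK'sub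
        set L := Metric.cthickening r K' with hLdef
        have hLc : IsCompact L := hK'c.cthickening
        have hLsub : L ⊆ D n := hrsub
        have hucont : UniformContinuousOn (F n) L :=
          hLc.uniformContinuousOn_of_continuous ((hcont n (by omega)).mono hLsub)
        obtain ⟨δ, hδ, hδap⟩ := (Metric.uniformContinuousOn_iff.mp hucont) (ε/2)
          (by linarith)
        set δ' := min (δ/2) r with hδ'def
        have hδ'pos : 0 < δ' := lt_min (by linarith) hr
        obtain ⟨g, hgmem, hgap⟩ := ih D F hopen' hcont'
          (fun i hi => hmaps i (by omega)) ℱ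
          (fun i hi => happrox i (by omega)) K hK hKc δ' hδ'pos
        obtain ⟨hN, hNmem, hNap⟩ := happrox n (by omega) L hLsub hLc (ε/2)
          (by linarith)
        refine ⟨fun i => if i = n then hN else g i, ?_, ?_⟩
        · intro i hi
          by_cases h : i = n
          · simpa [h] using hNmem
          · simpa [h] using hgmem i (by omega)
        · intro x hx
          have hcongr : compChain (fun i => if i = n then hN else g i) n
              = compChain g n :=
            compChain_congr n (fun i hi => by simp [Nat.ne_of_lt hi])
          set y := compChain F n x with hy
          set z := compChain g n x with hz
          have hyz : ‖y - z‖ ≤ δ' := hgap x hx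
          have hyK' : y ∈ K' := ⟨x, hx, rfl⟩
          have hyL : y ∈ L := Metric.self_subset_cthickening K' hyK'
          have hzL : z ∈ L := by
            refine Metric.mem_cthickening_of_dist_le z y r K' hyK' ?_
            rw [dist_eq_norm]
            calc ‖z - y‖ = ‖y - z‖ := by rw [norm_sub_rev]
              _ ≤ δ' := hyz
              _ ≤ r := min_le_right _ _
          have h1 : dist (F n y) (F n z) < ε/2 := by
            apply hδap y hyL z hzL
            rw [dist_eq_norm]
            calc ‖y - z‖ ≤ δ' := hyz
              _ ≤ δ/2 := min_le_left _ _
              _ < δ := by linarith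
          have h2 : ‖F n z - hN z‖ ≤ ε/2 := hNap z hzL
          have : compChain (fun i => if i = n then hN else g i) (n+1) x = hN z := by
            simp [compChain, hcongr, hz]
          rw [show compChain F (n+1) x = F n y from rfl, this]
          calc ‖F n y - hN z‖ ≤ ‖F n y - F n z‖ + ‖F n z - hN z‖ := by
                have := norm_sub_le_norm_sub_add_norm_sub (F n y) (F n z) (hN z)
                exact this
            _ ≤ ε/2 + ε/2 := by
                refine add_le_add ?_ h2
                rw [← dist_eq_norm]; linarith
            _ = ε := by ring

/-- uniform approximation of compositions. If a class `ℱ` of continuous maps can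
uniformly approximate each `F i` on compact subsets of its open domain `D i`, then compositions
from `ℱ` uniformly approximate `F (n-1) ∘ ⋯ ∘ F 0` on compact subsets of `D 0`. -/
theorem composition_approximation
    (d : ℕ) (hd : 1 ≤ d) (n : ℕ) (hn : 1 ≤ n)
    (D : ℕ → Set (Euc d)) (F : ℕ → Euc d → Euc d)
    (hopen : ∀ i < n, IsOpen (D i))
    (hcont : ∀ i < n, ContinuousOn (F i) (D i))
    (hmaps : ∀ i, i + 1 < n → Set.MapsTo (F i) (D i) (D (i + 1)))
    (ℱ : Set (Euc d → Euc d))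
    (hℱcont : ∀ h ∈ ℱ, Continuous h)
    (happrox : ∀ i < n, ∀ K : Set (Euc d), K ⊆ D i → IsCompact K → ∀ δ : ℝ, 0 < δ →
      ∃ h ∈ ℱ, ∀ x ∈ K, ‖F i x - h x‖ ≤ δ)
    (K : Set (Euc d)) (hK : K ⊆ D 0) (hKc : IsCompact K) (ε : ℝ) (hε : 0 < ε) :
    ∃ h : ℕ → Euc d → Euc d, (∀ i < n, h i ∈ ℱ) ∧
      ∀ x ∈ K, ‖compChain F n x - compChain h n x‖ ≤ ε :=
  main_aux n D F hopen hcont hmaps ℱ happrox K hK hKc ε hε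
end
end

section
/- Let d ≥ 1, let f₁, …, f_m : ℝ^d → ℝ^d be locally Lipschitz continuous, let a₁, …, a_m > 0 and set f = a₁ f₁ + ⋯ + a_m f_m. Let τ ≥ 0 and let Ω ⊆ ℝ^d be compact, and suppose that for every x ∈ Ω there is a differentiable curve γ_x : [0, τ] → ℝ^d with γ_x(0) = x and γ_x′(t) = f(γ_x(t)) for all t ∈ [0, τ]. Then for every ε > 0 there exists n ∈ ℕ such that for every x ∈ Ω there exists a piecewise solution η from x for the sequence of mn vector fields consisting of (f₁, f₂, …, f_m) repeated n times, with corresponding times (a₁τ/n, a₂τ/n, …, a_mτ/n) repeated n times, and its endpoint satisfies ‖η(T) − γ_x(τ)‖ ≤ ε, where T = (a₁ + ⋯ + a_m)τ. -/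
noncomputable section

/-- A piecewise solution from `x` for the vector fields `g 0, …, g (n-1)` with times
`τ 0, …, τ (n-1)`: a curve, continuous on `[0, T]` with `T = τ 0 + ⋯ + τ (n-1)`, starting at `x`,
which on each open subinterval `(t_{i}, t_{i+1})` solves `γ' = g i (γ)`. -/
def IsPiecewiseSolution {d : ℕ} (n : ℕ) (g : ℕ → Euc d → Euc d) (τ : ℕ → ℝ)
    (x : Euc d) (γ : ℝ → Euc d) : Prop :=
  ContinuousOn γ (Set.Icc 0 (∑ j ∈ Finset.range n, τ j)) ∧ γ 0 = x ∧
  ∀ i < n, ∀ t ∈ Set.Ioo (∑ j ∈ Finset.range i, τ j) (∑ j ∈ Finset.range (i + 1), τ j),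
    HasDerivAt γ (g i (γ t)) t

open Set Metric Real

/-- Continuous induction: if whenever `g ≤ R` on `[a,t)` we get `g t < R`, then `g < R` on all
of `[a,b]`. -/
lemma bootstrap_lt {a b R : ℝ} {g : ℝ → ℝ} (hab : a ≤ b) (hg : ContinuousOn g (Set.Icc a b))
    (h : ∀ t ∈ Set.Icc a b, (∀ s ∈ Set.Ico a t, g s ≤ R) → g t < R) :
    ∀ t ∈ Set.Icc a b, g t < R := by
  suffices H : ∀ t ∈ Set.Icc a b, g t ≤ R by
    intro t ht
    exact h t ht fun s hs => H s ⟨hs.1, hs.2.le.trans ht.2⟩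
  set S : Set ℝ := {t | t ∈ Set.Icc a b ∧ ∀ s ∈ Set.Icc a t, g s ≤ R} with hSdef
  have haS : a ∈ S := by
    refine ⟨⟨le_rfl, hab⟩, fun s hs => ?_⟩
    have : s = a := le_antisymm hs.2 hs.1
    subst this
    exact (h s ⟨le_rfl, hab⟩ (fun u hu => absurd hu.2 (not_lt.2 hu.1))).le
  have hne : S.Nonempty := ⟨a, haS⟩
  have hbdd : BddAbove S := ⟨b, fun t ht => ht.1.2⟩
  set c := sSup S with hc
  have hac : a ≤ c := le_csSup hbdd haS
  have hcb : c ≤ b := csSup_le hne fun t ht => ht.1.2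
  have key : ∀ s ∈ Set.Ico a c, g s ≤ R := by
    intro s hs
    obtain ⟨t, htS, hst⟩ := exists_lt_of_lt_csSup hne hs.2
    exact htS.2 s ⟨hs.1, hst.le⟩
  have hgc : g c < R := h c ⟨hac, hcb⟩ key
  have hcS : c ∈ S := by
    refine ⟨⟨hac, hcb⟩, fun s hs => ?_⟩
    rcases lt_or_eq_of_le hs.2 with h' | h'
    · exact key s ⟨hs.1, h'⟩
    · subst h'; exact hgc.le
  rcases eq_or_lt_of_le hcb with heq | hlt
  · intro t ht
    exact hcS.2 t ⟨ht.1, ht.2.trans heq.ge⟩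
  · exfalso
    have hcont : ContinuousWithinAt g (Set.Icc a b) c := hg c ⟨hac, hcb⟩
    have hev : ∀ᶠ u in nhdsWithin c (Set.Icc a b), g u < R :=
      hcont (isOpen_Iio.mem_nhds hgc)
    rw [Filter.eventually_iff, Metric.mem_nhdsWithin_iff] at hev
    obtain ⟨δ, hδ, hδ'⟩ := hev
    replace hδ' : ∀ s, dist s c < δ → s ∈ Set.Icc a b → g s < R := fun s h1 h2 => hδ' ⟨h1, h2⟩
    set t' := min b (c + δ / 2) with ht'
    have hct' : c < t' := lt_min hlt (by linarith)
    have ht'b : t' ≤ b := min_le_left _ _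
    have ht'S : t' ∈ S := by
      refine ⟨⟨hac.trans hct'.le, ht'b⟩, fun s hs => ?_⟩
      rcases le_or_gt s c with h' | h'
      · exact hcS.2 s ⟨hs.1, h'⟩
      · have hsd : dist s c < δ := by
          rw [Real.dist_eq, abs_of_pos (by linarith)]
          have : s ≤ c + δ / 2 := hs.2.trans (min_le_right _ _)
          linarith
        exact (hδ' s hsd ⟨hs.1.trans' (by linarith), hs.2.trans ht'b⟩).le
    exact absurd (le_csSup hbdd ht'S) (not_le.2 hct')

/-- A locally Lipschitz function is Lipschitz on compact sets. -/
lemma LocallyLipschitz.exists_lipschitzOnWith_isCompact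
    {E F : Type*} [NormedAddCommGroup E] [NormedAddCommGroup F]
    {f : E → F} (hf : LocallyLipschitz f) {K : Set E} (hK : IsCompact K) :
    ∃ C : NNReal, LipschitzOnWith C f K := by
  rcases K.eq_empty_or_nonempty with rfl | hKne
  · exact ⟨1, by simp⟩
  have hloc : ∀ x : E, ∃ C : NNReal, ∃ ρ : ℝ, 0 < ρ ∧ LipschitzOnWith C f (Metric.ball x ρ) := by
    intro x
    obtain ⟨C, t, ht, hlip⟩ := hf x
    obtain ⟨ρ, hρ, hball⟩ := Metric.mem_nhds_iff.1 ht
    exact ⟨C, ρ, hρ, hlip.mono hball⟩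
  choose C ρ hρ hlip using hloc
  obtain ⟨t, htK, hcover⟩ := hK.elim_nhds_subcover (fun x => Metric.ball x (ρ x / 2))
    (fun x _ => Metric.ball_mem_nhds x (by linarith [hρ x]))
  obtain ⟨M, hM⟩ := hK.exists_bound_of_continuousOn hf.continuous.continuousOn
  have htne : t.Nonempty := by
    obtain ⟨x, hx⟩ := hKne
    obtain ⟨y, hy, _⟩ := Set.mem_iUnion₂.1 (hcover hx)
    exact ⟨y, hy⟩
  set δ : ℝ := t.inf' htne (fun x => ρ x / 2) with hδdef
  have hδpos : 0 < δ := by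
    rw [hδdef, Finset.lt_inf'_iff]
    exact fun x _ => by linarith [hρ x]
  have hM0 : 0 ≤ M := le_trans (norm_nonneg _) (hM hKne.choose hKne.choose_spec)
  set C₀ : NNReal := max (t.sup C) (2 * M / δ).toNNReal with hC₀
  refine ⟨C₀, lipschitzOnWith_iff_dist_le_mul.2 fun x hx y hy => ?_⟩
  rcases lt_or_ge (dist x y) δ with hd | hd
  · obtain ⟨x₀, hx₀t, hx₀⟩ := Set.mem_iUnion₂.1 (hcover hx)
    have hx' : x ∈ Metric.ball x₀ (ρ x₀) := by
      rw [Metric.mem_ball] at hx₀ ⊢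
      linarith [hρ x₀]
    have hy' : y ∈ Metric.ball x₀ (ρ x₀) := by
      rw [Metric.mem_ball] at hx₀ ⊢
      have hδle : δ ≤ ρ x₀ / 2 := Finset.inf'_le _ hx₀t
      calc dist y x₀ ≤ dist y x + dist x x₀ := dist_triangle _ _ _
        _ < δ + ρ x₀ / 2 := by rw [dist_comm y x]; exact add_lt_add hd hx₀
        _ ≤ ρ x₀ := by linarith
    calc dist (f x) (f y) ≤ (C x₀ : ℝ) * dist x y :=
          lipschitzOnWith_iff_dist_le_mul.1 (hlip x₀) x hx' y hy'
      _ ≤ (C₀ : ℝ) * dist x y := by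
          gcongr
          exact_mod_cast le_max_of_le_left (Finset.le_sup hx₀t)
  · have h2M : dist (f x) (f y) ≤ 2 * M := by
      calc dist (f x) (f y) ≤ ‖f x‖ + ‖f y‖ := dist_le_norm_add_norm _ _
        _ ≤ 2 * M := by linarith [hM x hx, hM y hy]
    calc dist (f x) (f y) ≤ 2 * M := h2M
      _ = (2 * M / δ) * δ := by field_simp
      _ ≤ (2 * M / δ) * dist x y := by
          apply mul_le_mul_of_nonneg_left hd (by positivity)
      _ ≤ (C₀ : ℝ) * dist x y := by
          gcongr
          refine le_trans ?_ (le_max_right _ _ : ((2 * M / δ).toNNReal : ℝ) ≤ (C₀:ℝ))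
          rw [Real.coe_toNNReal _ (by positivity)]

lemma continuousOn_union_closed {X Y : Type*} [TopologicalSpace X] [TopologicalSpace Y]
    {f : X → Y} {s t : Set X} (hs : IsClosed s) (ht : IsClosed t)
    (hfs : ContinuousOn f s) (hft : ContinuousOn f t) : ContinuousOn f (s ∪ t) := by
  intro x hx
  have hside : ∀ {u v : Set X}, IsClosed v → ContinuousOn f u → ContinuousOn f v → x ∈ u →
      ContinuousWithinAt f (u ∪ v) x := by
    intro u v hv hfu hfv hxu
    refine (hfu x hxu).union ?_
    by_cases hxv : x ∈ v
    · exact hfv x hxv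
    · exact continuousWithinAt_of_notMem_closure (by rwa [hv.closure_eq])
  rcases hx with hxs | hxt
  · exact hside ht hfs hft hxs
  · exact (Set.union_comm t s) ▸ hside hs hft hfs hxt

lemma continuousOn_glue {E : Type*} [TopologicalSpace E] {φ ψ : ℝ → E} {a α β : ℝ}
    (h1 : a ≤ α) (h2 : α ≤ β)
    (hφ : ContinuousOn φ (Set.Icc a α)) (hψ : ContinuousOn ψ (Set.Icc α β)) (heq : φ α = ψ α) :
    ContinuousOn (fun t => if t ≤ α then φ t else ψ t) (Set.Icc a β) := by
  have e1 : Set.EqOn (fun t => if t ≤ α then φ t else ψ t) φ (Set.Icc a α) :=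
    fun t ht => if_pos ht.2
  have e2 : Set.EqOn (fun t => if t ≤ α then φ t else ψ t) ψ (Set.Icc α β) := by
    intro t ht
    by_cases h : t ≤ α
    · have : t = α := le_antisymm h ht.1
      simp only [this, if_pos le_rfl, heq]
    · exact if_neg h
  rw [← Set.Icc_union_Icc_eq_Icc h1 h2]
  exact continuousOn_union_closed isClosed_Icc isClosed_Icc
    (hφ.congr e1) (hψ.congr e2)

/-- Short-time flow of a vector field, staying near the starting point, with a first-order
Taylor estimate at the endpoint. -/
lemma step_flow {E : Type*} [NormedAddCommGroup E] [NormedSpace ℝ E] [CompleteSpace E]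
    {g : E → E} {K : Set E} {L : NNReal} {M r : ℝ}
    (hL : LipschitzOnWith L g K) (hM : ∀ z ∈ K, ‖g z‖ ≤ M)
    (hr : 0 < r) {z : E} (hz : Metric.closedBall z r ⊆ K)
    {s h : ℝ} (hh : 0 ≤ h) (hMh : M * h ≤ r / 2) :
    ∃ u : ℝ → E, u s = z ∧
      (∀ t ∈ Set.Icc s (s + h), HasDerivWithinAt u (g (u t)) (Set.Icc s (s + h)) t) ∧
      (∀ t ∈ Set.Icc s (s + h), ‖u t - z‖ ≤ M * (t - s)) ∧
      ‖u (s + h) - z - h • g z‖ ≤ (L : ℝ) * M * h ^ 2 := by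
  have hM0 : 0 ≤ M := le_trans (norm_nonneg _) (hM z (hz (Metric.mem_closedBall_self hr.le)))
  have hPL : IsPicardLindelof (fun _ x => g x) (tmin := s) (tmax := s + h)
      ⟨s, ⟨le_rfl, by linarith⟩⟩ z ⟨r, hr.le⟩ 0 ⟨M, hM0⟩ L :=
    IsPicardLindelof.of_time_independent (fun x hx => hM x (hz hx)) (hL.mono hz) (by
      have : max (s + h - s) (s - s) = h := by
        rw [max_eq_left (by linarith)]; ring
      show M * max (s + h - s) (s - s) ≤ r - 0
      rw [this]; linarith)
  obtain ⟨u, hu0, huderiv⟩ := hPL.exists_eq_forall_mem_Icc_hasDerivWithinAt₀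
  replace hu0 : u s = z := hu0
  have hucont : ContinuousOn u (Set.Icc s (s + h)) :=
    fun t ht => (huderiv t ht).continuousWithinAt
  have hderiv' : ∀ t' ∈ Set.Ico s (s + h), HasDerivWithinAt u (g (u t')) (Set.Ici t') t' :=
    fun t' ht' => (huderiv t' ⟨ht'.1, ht'.2.le⟩).mono_of_mem_nhdsWithin
      (Icc_mem_nhdsGE_of_mem ht')
  have claim1 : ∀ t ∈ Set.Icc s (s + h), ‖u t - z‖ < 3 * r / 4 := by
    refine bootstrap_lt (by linarith) ((hucont.sub continuousOn_const).norm) ?_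
    intro t ht hprem
    have hmv := norm_image_sub_le_of_norm_deriv_right_le_segment
      (f := u) (f' := fun t' => g (u t')) (C := M)
      (hucont.mono (Set.Icc_subset_Icc_right ht.2))
      (fun x hx => hderiv' x ⟨hx.1, lt_of_lt_of_le hx.2 ht.2⟩)
      (fun x hx => hM (u x) (hz (Metric.mem_closedBall.2 (by
        rw [dist_eq_norm]; linarith [hprem x hx]))))
      t ⟨ht.1, le_rfl⟩
    rw [hu0] at hmv
    have : M * (t - s) ≤ M * h := by
      apply mul_le_mul_of_nonneg_left _ hM0
      linarith [ht.2]
    calc ‖u t - z‖ ≤ M * (t - s) := hmv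
      _ ≤ M * h := this
      _ ≤ r / 2 := hMh
      _ < 3 * r / 4 := by linarith
  have memK : ∀ t ∈ Set.Icc s (s + h), u t ∈ K := by
    intro t ht
    refine hz (Metric.mem_closedBall.2 ?_)
    rw [dist_eq_norm]
    linarith [claim1 t ht]
  have claim2 : ∀ t ∈ Set.Icc s (s + h), ‖u t - z‖ ≤ M * (t - s) := by
    have hmv := norm_image_sub_le_of_norm_deriv_right_le_segment
      (f := u) (f' := fun t' => g (u t')) (C := M) hucont hderiv'
      (fun x hx => hM (u x) (memK x ⟨hx.1, hx.2.le⟩))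
    intro t ht
    have := hmv t ht
    rwa [hu0] at this
  refine ⟨u, hu0, huderiv, claim2, ?_⟩
  -- Taylor estimate via mean value on w t = u t - (t - s) • g z
  have hwderiv : ∀ t' ∈ Set.Ico s (s + h),
      HasDerivWithinAt (fun t => u t - (t - s) • g z) (g (u t') - g z) (Set.Ici t') t' := by
    intro t' ht'
    have h2 : HasDerivAt (fun t : ℝ => (t - s) • g z) (g z) t' := by
      have := ((hasDerivAt_id t').sub_const s).smul_const (g z)
      rwa [one_smul] at this
    exact (hderiv' t' ht').sub (h2.hasDerivWithinAt)
  have hwcont : ContinuousOn (fun t => u t - (t - s) • g z) (Set.Icc s (s + h)) :=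
    hucont.sub (((continuousOn_id.sub continuousOn_const)).smul continuousOn_const)
  have hwbound : ∀ t' ∈ Set.Ico s (s + h), ‖g (u t') - g z‖ ≤ (L : ℝ) * M * h := by
    intro t' ht'
    have hd := hL.dist_le_mul (u t') (memK t' ⟨ht'.1, ht'.2.le⟩) z
      (hz (Metric.mem_closedBall_self hr.le))
    rw [dist_eq_norm, dist_eq_norm] at hd
    calc ‖g (u t') - g z‖ ≤ (L : ℝ) * ‖u t' - z‖ := hd
      _ ≤ (L : ℝ) * (M * (t' - s)) := by
          apply mul_le_mul_of_nonneg_left _ (L.coe_nonneg)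
          exact claim2 t' ⟨ht'.1, ht'.2.le⟩
      _ ≤ (L : ℝ) * (M * h) := by
          apply mul_le_mul_of_nonneg_left _ (L.coe_nonneg)
          apply mul_le_mul_of_nonneg_left _ hM0
          linarith [ht'.2]
      _ = (L : ℝ) * M * h := by ring
  have hmv := norm_image_sub_le_of_norm_deriv_right_le_segment
    (f := fun t => u t - (t - s) • g z) (f' := fun t' => g (u t') - g z)
    (C := (L : ℝ) * M * h) hwcont hwderiv hwbound (s + h) ⟨by linarith, le_rfl⟩
  have hws : u s - (s - s) • g z = z := by
    rw [hu0]; simp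
  have harith : s + h - s = h := by ring
  beta_reduce at hmv
  rw [hws, harith] at hmv
  calc ‖u (s + h) - z - h • g z‖ = ‖u (s + h) - h • g z - z‖ := by
        congr 1; abel
    _ ≤ (L : ℝ) * M * h * h := hmv
    _ = (L : ℝ) * M * h ^ 2 := by ring

lemma sum_smul_lipschitzOnWith {E : Type*} [NormedAddCommGroup E] [NormedSpace ℝ E]
    {m : ℕ} (f : Fin m → E → E) (a : Fin m → ℝ) (ha : ∀ i, 0 ≤ a i)
    {K : Set E} {L : NNReal} (hl : ∀ i, LipschitzOnWith L (f i) K) :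
    LipschitzOnWith ((∑ i, a i).toNNReal * L) (fun z => ∑ i, a i • f i z) K := by
  refine lipschitzOnWith_iff_dist_le_mul.2 fun p hp q hq => ?_
  rw [dist_eq_norm]
  have : (∑ i, a i • f i p) - (∑ i, a i • f i q) = ∑ i, a i • (f i p - f i q) := by
    rw [← Finset.sum_sub_distrib]
    congr 1; ext i; rw [smul_sub]
  rw [this]
  calc ‖∑ i, a i • (f i p - f i q)‖ ≤ ∑ i, ‖a i • (f i p - f i q)‖ := norm_sum_le _ _
    _ ≤ ∑ i, a i * ((L : ℝ) * dist p q) := by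
        apply Finset.sum_le_sum
        intro i _
        rw [norm_smul, Real.norm_eq_abs, abs_of_nonneg (ha i)]
        apply mul_le_mul_of_nonneg_left _ (ha i)
        rw [← dist_eq_norm]
        exact (hl i).dist_le_mul p hp q hq
    _ = (∑ i, a i) * (L : ℝ) * dist p q := by rw [← Finset.sum_mul]; ring
    _ = (((∑ i, a i).toNNReal : ℝ) * (L : ℝ)) * dist p q := by
        rw [Real.coe_toNNReal _ (Finset.sum_nonneg fun i _ => ha i)]
    _ = (((∑ i, a i).toNNReal * L : NNReal) : ℝ) * dist p q := by push_cast; ring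

/-- Existence of a compact set containing a uniform neighbourhood of all the trajectories. -/
lemma exists_tube {E : Type*} [NormedAddCommGroup E] [NormedSpace ℝ E] [ProperSpace E]
    {F : E → E} (hFlip : ∀ C : Set E, IsCompact C → ∃ L : NNReal, LipschitzOnWith L F C)
    {Ω : Set E} (hΩ : IsCompact Ω) {τ : ℝ} (hτ : 0 ≤ τ)
    {γ : E → ℝ → E} (hγ0 : ∀ x ∈ Ω, γ x 0 = x)
    (hγd : ∀ x ∈ Ω, ∀ t ∈ Set.Icc 0 τ, HasDerivAt (γ x) (F (γ x t)) t) :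
    ∃ K : Set E, IsCompact K ∧
      ∀ x ∈ Ω, ∀ t ∈ Set.Icc 0 τ, Metric.closedBall (γ x t) (1/4) ⊆ K := by
  classical
  have hγc : ∀ x ∈ Ω, ContinuousOn (γ x) (Set.Icc 0 τ) :=
    fun x hx t ht => ((hγd x hx t ht).continuousAt).continuousWithinAt
  have hlocal : ∀ x₀ ∈ Ω, ∃ δ : ℝ, 0 < δ ∧ ∀ y ∈ Ω, dist y x₀ < δ →
      ∀ t ∈ Set.Icc 0 τ, dist (γ y t) (γ x₀ t) ≤ 1/2 := by
    intro x₀ hx₀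
    set T := γ x₀ '' Set.Icc 0 τ with hT
    have hTc : IsCompact T := (isCompact_Icc.image_of_continuousOn (hγc x₀ hx₀))
    set Kx := Metric.cthickening 1 T with hKx
    obtain ⟨L, hLlip⟩ := hFlip Kx hTc.cthickening
    refine ⟨Real.exp (-(L : ℝ) * τ) / 4, by positivity, fun y hy hyd => ?_⟩
    have key : ∀ t ∈ Set.Icc (0:ℝ) τ, dist (γ y t) (γ x₀ t) < 1/2 := by
      refine bootstrap_lt hτ (by have := continuous_dist.comp_continuousOn ((hγc y hy).prodMk (hγc x₀ hx₀)); exact this) ?_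
      intro t ht hprem
      have hgron := dist_le_of_trajectories_ODE_of_mem
        (v := fun _ z => F z) (s := fun _ => Kx) (K := L)
        (fun _ _ => hLlip)
        ((hγc y hy).mono (Set.Icc_subset_Icc_right ht.2))
        (fun s' hs' => (hγd y hy s' ⟨hs'.1, hs'.2.le.trans ht.2⟩).hasDerivWithinAt)
        (fun s' hs' => Metric.mem_cthickening_of_dist_le (γ y s') (γ x₀ s') 1 T
          ⟨s', ⟨hs'.1, hs'.2.le.trans ht.2⟩, rfl⟩
          (le_trans (hprem s' hs') (by norm_num)))
        ((hγc x₀ hx₀).mono (Set.Icc_subset_Icc_right ht.2))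
        (fun s' hs' => (hγd x₀ hx₀ s' ⟨hs'.1, hs'.2.le.trans ht.2⟩).hasDerivWithinAt)
        (fun s' hs' => Metric.self_subset_cthickening _ ⟨s', ⟨hs'.1, hs'.2.le.trans ht.2⟩, rfl⟩)
        (le_refl (dist (γ y 0) (γ x₀ 0)))
        t ⟨ht.1, le_rfl⟩
      have h0 : dist (γ y 0) (γ x₀ 0) = dist y x₀ := by rw [hγ0 y hy, hγ0 x₀ hx₀]
      rw [h0] at hgron
      have hexp : Real.exp ((L : ℝ) * (t - 0)) ≤ Real.exp ((L : ℝ) * τ) := by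
        apply Real.exp_le_exp.2
        have : (0:ℝ) ≤ (L : ℝ) := L.coe_nonneg
        nlinarith [ht.1, ht.2]
      calc dist (γ y t) (γ x₀ t) ≤ dist y x₀ * Real.exp ((L:ℝ) * (t - 0)) := hgron
        _ ≤ (Real.exp (-(L : ℝ) * τ) / 4) * Real.exp ((L:ℝ) * τ) := by
            apply mul_le_mul hyd.le hexp (Real.exp_nonneg _) (by positivity)
        _ = 1/4 := by
            rw [div_mul_eq_mul_div, ← Real.exp_add]
            norm_num
        _ < 1/2 := by norm_num
    exact fun t ht => (key t ht).le
  choose δ hδpos hδ using hlocal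
  obtain ⟨t, htΩ, hcover⟩ := hΩ.elim_nhds_subcover (fun x => if hx : x ∈ Ω then Metric.ball x (δ x hx) else ∅)
    (fun x hx => by simp only [dif_pos hx]; exact Metric.ball_mem_nhds x (hδpos x hx))
  refine ⟨⋃ x₀ ∈ t, Metric.cthickening 1 (γ x₀ '' Set.Icc 0 τ), ?_, ?_⟩
  · apply t.finite_toSet.isCompact_biUnion
    intro x₀ hx₀
    exact (isCompact_Icc.image_of_continuousOn (hγc x₀ (htΩ x₀ hx₀))).cthickening
  · intro y hy s hs z hz
    obtain ⟨x₀, hx₀t, hx₀⟩ := Set.mem_iUnion₂.1 (hcover hy)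
    have hx₀Ω : x₀ ∈ Ω := htΩ x₀ hx₀t
    simp only [dif_pos hx₀Ω] at hx₀
    have hd : dist (γ y s) (γ x₀ s) ≤ 1/2 := hδ x₀ hx₀Ω y hy hx₀ s hs
    refine Set.mem_biUnion hx₀t ?_
    refine Metric.mem_cthickening_of_dist_le z (γ x₀ s) 1 _ ⟨s, hs, rfl⟩ ?_
    calc dist z (γ x₀ s) ≤ dist z (γ y s) + dist (γ y s) (γ x₀ s) := dist_triangle _ _ _
      _ ≤ 1/4 + 1/2 := add_le_add (Metric.mem_closedBall.1 hz) hd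
      _ ≤ 1 := by norm_num

section Cycle

variable {E : Type*} [NormedAddCommGroup E] [NormedSpace ℝ E] [CompleteSpace E]

/-- The `j`-th coefficient in the periodic splitting scheme. -/
noncomputable def aa {m : ℕ} (hm : 0 < m) (a : Fin m → ℝ) (j : ℕ) : ℝ := a ⟨j % m, Nat.mod_lt j hm⟩

/-- The `k`-th switching time in the splitting scheme. -/
noncomputable def tt {m : ℕ} (hm : 0 < m) (a : Fin m → ℝ) (τ : ℝ) (n : ℕ) (k : ℕ) : ℝ :=
  ∑ j ∈ Finset.range k, aa hm a j * τ / n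

lemma aa_period {m : ℕ} (hm : 0 < m) (a : Fin m → ℝ) (c j : ℕ) :
    aa hm a (c * m + j) = aa hm a j := by
  unfold aa
  congr 1
  apply Fin.ext
  show (c * m + j) % m = j % m
  rw [Nat.add_comm, Nat.add_mul_mod_self_right]

lemma aa_lt {m : ℕ} (hm : 0 < m) (a : Fin m → ℝ) {j : ℕ} (hj : j < m) :
    aa hm a j = a ⟨j, hj⟩ := by
  unfold aa
  congr 1
  apply Fin.ext
  exact Nat.mod_eq_of_lt hj

lemma aa_pos {m : ℕ} (hm : 0 < m) {a : Fin m → ℝ} (ha : ∀ i, 0 < a i) (j : ℕ) :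
    0 < aa hm a j := ha _

lemma aa_le_sum {m : ℕ} (hm : 0 < m) {a : Fin m → ℝ} (ha : ∀ i, 0 < a i) (j : ℕ) :
    aa hm a j ≤ ∑ i, a i :=
  Finset.single_le_sum (fun i _ => (ha i).le) (Finset.mem_univ _)

lemma sum_aa_eq {m : ℕ} (hm : 0 < m) (a : Fin m → ℝ) :
    ∑ j ∈ Finset.range m, aa hm a j = ∑ i, a i := by
  rw [← Fin.sum_univ_eq_sum_range]
  apply Finset.sum_congr rfl
  intro i _
  rw [aa_lt hm a i.isLt]

lemma sum_aa_le {m : ℕ} (hm : 0 < m) {a : Fin m → ℝ} (ha : ∀ i, 0 < a i) {i : ℕ} (hi : i ≤ m) :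
    ∑ j ∈ Finset.range i, aa hm a j ≤ ∑ i, a i := by
  rw [← sum_aa_eq hm a]
  exact Finset.sum_le_sum_of_subset_of_nonneg (Finset.range_subset_range.2 hi)
    (fun j _ _ => (aa_pos hm ha j).le)

lemma tt_succ {m : ℕ} (hm : 0 < m) (a : Fin m → ℝ) (τ : ℝ) (n : ℕ) (k : ℕ) :
    tt hm a τ n (k + 1) = tt hm a τ n k + aa hm a k * τ / n := by
  unfold tt; rw [Finset.sum_range_succ]

lemma tt_mono {m : ℕ} (hm : 0 < m) {a : Fin m → ℝ} (ha : ∀ i, 0 < a i) {τ : ℝ} (hτ : 0 ≤ τ)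
    (n : ℕ) {k l : ℕ} (hkl : k ≤ l) : tt hm a τ n k ≤ tt hm a τ n l :=
  Finset.sum_le_sum_of_subset_of_nonneg (Finset.range_subset_range.2 hkl)
    (fun j _ _ => div_nonneg (mul_nonneg (aa_pos hm ha j).le hτ) (Nat.cast_nonneg n))

lemma tt_strict {m : ℕ} (hm : 0 < m) {a : Fin m → ℝ} (ha : ∀ i, 0 < a i) {τ : ℝ} (hτ : 0 < τ)
    {n : ℕ} (hn : 0 < n) (k : ℕ) : tt hm a τ n k < tt hm a τ n (k + 1) := by
  rw [tt_succ]
  have : 0 < aa hm a k * τ / n := by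
    apply div_pos (mul_pos (aa_pos hm ha k) hτ)
    exact_mod_cast hn
  linarith

end Cycle

set_option maxHeartbeats 1000000 in
lemma cycle_step
    {E : Type*} [NormedAddCommGroup E] [NormedSpace ℝ E] [CompleteSpace E]
    {m n : ℕ} (hm : 0 < m) (hn : 0 < n)
    (f : Fin m → E → E) (a : Fin m → ℝ) (ha : ∀ i, 0 < a i)
    {τ : ℝ} (hτ : 0 < τ) {K : Set E} {L : NNReal} {M r : ℝ}
    (hlip : ∀ i, LipschitzOnWith L (f i) K)
    (hbd : ∀ i, ∀ z ∈ K, ‖f i z‖ ≤ M) (hM1 : 1 ≤ M) (hr : 0 < r)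
    {γx : ℝ → E}
    (hγx : ∀ t ∈ Set.Icc 0 τ, HasDerivAt γx (∑ i, a i • f i (γx t)) t)
    (htube : ∀ t ∈ Set.Icc 0 τ, Metric.closedBall (γx t) r ⊆ K)
    {c : ℕ} (hc : c < n)
    (hs1 : ∀ i, M * (a i * (τ / n)) ≤ r / 4)
    (hs2 : M * (∑ i, a i) * (τ / n) ≤ r / 8)
    (hs4 : 3 * (L : ℝ) * (∑ i, a i) * (τ / n) ≤ 1)
    {p : E} (hp : ‖p - γx (c * (τ / n))‖ ≤ r / 4) :
    ∃ u : ℝ → E,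
      u (tt hm a τ n (c * m)) = p ∧
      ContinuousOn u (Set.Icc (tt hm a τ n (c * m)) (tt hm a τ n ((c + 1) * m))) ∧
      (∀ k, c * m ≤ k → k < (c + 1) * m → ∀ t ∈ Set.Ioo (tt hm a τ n k) (tt hm a τ n (k + 1)),
        HasDerivAt u (f ⟨k % m, Nat.mod_lt k hm⟩ (u t)) t) ∧
      ‖u (tt hm a τ n ((c + 1) * m)) - γx ((c + 1) * (τ / n))‖ ≤
        (1 + (∑ i, a i) * L * (τ / n)) * ‖p - γx (c * (τ / n))‖
          + 4 * L * M * (∑ i, a i) ^ 2 * (τ / n) ^ 2 := by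
  have hM0 : (0:ℝ) < M := lt_of_lt_of_le one_pos hM1
  have hL0 : (0:ℝ) ≤ L := L.coe_nonneg
  set A := ∑ i, a i with hAdef
  haveI : Nonempty (Fin m) := ⟨⟨0, hm⟩⟩
  have hA0 : 0 < A := Finset.sum_pos (fun i _ => ha i) Finset.univ_nonempty
  set h := τ / n with hhdef
  have hh0 : 0 < h := div_pos hτ (by exact_mod_cast hn)
  have hnh : (n : ℝ) * h = τ := by
    rw [hhdef]; field_simp
  have hch : (c : ℝ) * h ∈ Set.Icc (0:ℝ) τ := by
    constructor
    · positivity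
    · rw [← hnh]
      apply mul_le_mul_of_nonneg_right _ hh0.le
      exact_mod_cast hc.le
  have hch1 : ((c : ℝ) + 1) * h ∈ Set.Icc (0:ℝ) τ := by
    constructor
    · positivity
    · rw [← hnh]
      apply mul_le_mul_of_nonneg_right _ hh0.le
      have : (c : ℝ) + 1 ≤ n := by exact_mod_cast hc
      exact this
  set q := γx ((c : ℝ) * h) with hqdef
  have hq : Metric.closedBall q r ⊆ K := htube _ hch
  have hqK : q ∈ K := hq (Metric.mem_closedBall_self hr.le)
  have hpK : p ∈ K := hq (Metric.mem_closedBall.2 (by rw [dist_eq_norm]; linarith))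
  -- bound on partial sums of coefficients
  have hsum3 : ∀ i ≤ m, ∑ j ∈ Finset.range i, (aa hm a j ^ 2 + 2 * aa hm a j * A) ≤ 3 * A ^ 2 := by
    intro i him
    have h1 : ∀ j ∈ Finset.range i, aa hm a j ^ 2 + 2 * aa hm a j * A ≤ 3 * A * aa hm a j := by
      intro j _
      have h2 := aa_le_sum hm ha j
      have h3 := (aa_pos hm ha j).le
      nlinarith
    calc ∑ j ∈ Finset.range i, (aa hm a j ^ 2 + 2 * aa hm a j * A)
        ≤ ∑ j ∈ Finset.range i, 3 * A * aa hm a j := Finset.sum_le_sum h1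
      _ = 3 * A * ∑ j ∈ Finset.range i, aa hm a j := (Finset.mul_sum _ _ _).symm
      _ ≤ 3 * A * A := by
          apply mul_le_mul_of_nonneg_left (sum_aa_le hm ha him) (by positivity)
      _ = 3 * A ^ 2 := by ring
  -- the inner induction on pieces
  have claim : ∀ i, i ≤ m → ∃ u : ℝ → E,
      u (tt hm a τ n (c * m)) = p ∧
      ContinuousOn u (Set.Icc (tt hm a τ n (c * m)) (tt hm a τ n (c * m + i))) ∧
      (∀ k, c * m ≤ k → k < c * m + i → ∀ t ∈ Set.Ioo (tt hm a τ n k) (tt hm a τ n (k + 1)),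
        HasDerivAt u (f ⟨k % m, Nat.mod_lt k hm⟩ (u t)) t) ∧
      ‖u (tt hm a τ n (c * m + i)) - p -
          h • ∑ j ∈ Finset.range i, aa hm a j • f ⟨j % m, Nat.mod_lt j hm⟩ p‖ ≤
        (L : ℝ) * M * h ^ 2 * ∑ j ∈ Finset.range i, (aa hm a j ^ 2 + 2 * aa hm a j * A) := by
    intro i
    induction i with
    | zero =>
      intro _
      refine ⟨fun _ => p, rfl, continuousOn_const, ?_, by simp⟩
      intro k hk1 hk2
      exact absurd hk2 (by omega)
    | succ i ih =>
      intro hi1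
      have hi : i < m := hi1
      obtain ⟨u, hu0, hucont, huderiv, huerr⟩ := ih (Nat.le_of_succ_le hi1)
      set T0 := tt hm a τ n (c * m) with hT0def
      set α := tt hm a τ n (c * m + i) with hαdef
      set z := u α with hzdef
      set i' : Fin m := ⟨i % m, Nat.mod_lt i hm⟩ with hi'def
      set hstep := aa hm a (c * m + i) * τ / n with hstepdef
      have hsteph : hstep = aa hm a i * h := by
        rw [hstepdef, aa_period, hhdef, mul_div_assoc]
      have haai : aa hm a i = a i' := rfl
      have hstep0 : 0 < hstep := by
        rw [hsteph]; exact mul_pos (aa_pos hm ha i) hh0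
      have hβ : tt hm a τ n (c * m + i + 1) = α + hstep := tt_succ hm a τ n (c * m + i)
      have hgeq : (⟨(c * m + i) % m, Nat.mod_lt _ hm⟩ : Fin m) = i' := by
        apply Fin.ext
        show (c * m + i) % m = i % m
        rw [Nat.add_comm, Nat.add_mul_mod_self_right]
      -- bound on the error so far
      have hSle : ∑ j ∈ Finset.range i, aa hm a j ≤ A := sum_aa_le hm ha hi.le
      have herrle : (L : ℝ) * M * h ^ 2 * ∑ j ∈ Finset.range i, (aa hm a j ^ 2 + 2 * aa hm a j * A)
          ≤ A * M * h := by
        calc (L : ℝ) * M * h ^ 2 * ∑ j ∈ Finset.range i, (aa hm a j ^ 2 + 2 * aa hm a j * A)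
            ≤ (L : ℝ) * M * h ^ 2 * (3 * A ^ 2) := by
              apply mul_le_mul_of_nonneg_left (hsum3 i hi.le) (by positivity)
          _ = (3 * (L:ℝ) * A * h) * (A * M * h) := by ring
          _ ≤ 1 * (A * M * h) := by
              apply mul_le_mul_of_nonneg_right _ (by positivity)
              rw [hhdef]; exact hs4
          _ = A * M * h := one_mul _
      have hnormS : ‖h • ∑ j ∈ Finset.range i, aa hm a j • f ⟨j % m, Nat.mod_lt j hm⟩ p‖
          ≤ A * M * h := by
        rw [norm_smul, Real.norm_eq_abs, abs_of_pos hh0]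
        rw [mul_comm (A * M) h]
        apply mul_le_mul_of_nonneg_left _ hh0.le
        calc ‖∑ j ∈ Finset.range i, aa hm a j • f ⟨j % m, Nat.mod_lt j hm⟩ p‖
            ≤ ∑ j ∈ Finset.range i, ‖aa hm a j • f ⟨j % m, Nat.mod_lt j hm⟩ p‖ := norm_sum_le _ _
          _ ≤ ∑ j ∈ Finset.range i, aa hm a j * M := by
              apply Finset.sum_le_sum
              intro j _
              rw [norm_smul, Real.norm_eq_abs, abs_of_pos (aa_pos hm ha j)]
              exact mul_le_mul_of_nonneg_left (hbd _ p hpK) (aa_pos hm ha j).le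
          _ = (∑ j ∈ Finset.range i, aa hm a j) * M := by rw [Finset.sum_mul]
          _ ≤ A * M := mul_le_mul_of_nonneg_right hSle hM0.le
      have hzp : ‖z - p‖ ≤ 2 * A * M * h := by
        have h1 : z - p = (z - p - h • ∑ j ∈ Finset.range i, aa hm a j • f ⟨j % m, Nat.mod_lt j hm⟩ p)
            + h • ∑ j ∈ Finset.range i, aa hm a j • f ⟨j % m, Nat.mod_lt j hm⟩ p := by abel
        rw [h1]
        calc _ ≤ ‖z - p - h • ∑ j ∈ Finset.range i, aa hm a j • f ⟨j % m, Nat.mod_lt j hm⟩ p‖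
              + ‖h • ∑ j ∈ Finset.range i, aa hm a j • f ⟨j % m, Nat.mod_lt j hm⟩ p‖ :=
              norm_add_le _ _
          _ ≤ A * M * h + A * M * h := add_le_add (le_trans huerr herrle) hnormS
          _ = 2 * A * M * h := by ring
      have hAMh : A * M * h ≤ r / 8 := by
        rw [hhdef]
        calc A * M * (τ / n) = M * A * (τ / n) := by ring
          _ ≤ r / 8 := hs2
      have hzq : ‖z - q‖ ≤ r / 2 := by
        calc ‖z - q‖ = ‖(z - p) + (p - q)‖ := by congr 1; abel
          _ ≤ ‖z - p‖ + ‖p - q‖ := norm_add_le _ _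
          _ ≤ 2 * A * M * h + r / 4 := add_le_add hzp hp
          _ ≤ r / 2 := by linarith
      have hzK : z ∈ K := hq (Metric.mem_closedBall.2 (by rw [dist_eq_norm]; linarith))
      have hball : Metric.closedBall z (r / 2) ⊆ K := by
        intro w hw
        apply hq
        rw [Metric.mem_closedBall] at hw ⊢
        calc dist w q ≤ dist w z + dist z q := dist_triangle _ _ _
          _ ≤ r / 2 + r / 2 := by
              refine add_le_add hw ?_
              rw [dist_eq_norm]; exact hzq
          _ = r := by ring
      have hMhstep : M * hstep ≤ (r / 2) / 2 := by
        rw [hsteph, haai]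
        calc M * (a i' * h) = M * (a i' * (τ / n)) := by rw [hhdef]
          _ ≤ r / 4 := hs1 i'
          _ = (r / 2) / 2 := by ring
      obtain ⟨w, hw0, hwderiv, hwnear, hwtaylor⟩ :=
        step_flow (s := α) (hlip i') (hbd i') (by linarith : (0:ℝ) < r / 2) hball hstep0.le hMhstep
      have hidx : c * m + (i + 1) = c * m + i + 1 := rfl
      -- glue
      refine ⟨fun t => if t ≤ α then u t else w t, ?_, ?_, ?_, ?_⟩
      · have hT0α : T0 ≤ α := tt_mono hm ha hτ.le n (Nat.le_add_right _ _)
        simp only [if_pos hT0α]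
        exact hu0
      · simp only [hidx]
        rw [hβ]
        have hT0α : T0 ≤ α := tt_mono hm ha hτ.le n (Nat.le_add_right _ _)
        refine continuousOn_glue hT0α (by linarith) hucont ?_ hw0.symm
        exact fun t ht => (hwderiv t ht).continuousWithinAt
      · intro k hk1 hk2 t ht
        rcases Nat.lt_or_ge k (c * m + i) with hklt | hkge
        · have htα : t < α := lt_of_lt_of_le ht.2 (tt_mono hm ha hτ.le n hklt)
          have hvt : (fun t => if t ≤ α then u t else w t) t = u t := if_pos htα.le
          have ev : (fun t => if t ≤ α then u t else w t) =ᶠ[nhds t] u := by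
            filter_upwards [Iio_mem_nhds htα] with s hs
            exact if_pos (le_of_lt hs)
          rw [hvt]
          exact (huderiv k hk1 hklt t ht).congr_of_eventuallyEq ev
        · have hkeq : k = c * m + i := by omega
          subst hkeq
          have htα : α < t := ht.1
          have htβ : t < α + hstep := hβ ▸ ht.2
          have hd : HasDerivAt w (f i' (w t)) t := by
            refine (hwderiv t ⟨ht.1.le, htβ.le⟩).hasDerivAt (Icc_mem_nhds htα htβ)
          have hvt : (fun t => if t ≤ α then u t else w t) t = w t := if_neg (not_le.2 htα)
          have ev : (fun t => if t ≤ α then u t else w t) =ᶠ[nhds t] w := by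
            filter_upwards [Ioi_mem_nhds htα] with s hs
            exact if_neg (not_le.2 hs)
          rw [hvt, hgeq]
          exact hd.congr_of_eventuallyEq ev
      · simp only [hidx]
        have hβα : ¬ (tt hm a τ n (c * m + i + 1) ≤ α) := by
          rw [hβ]; linarith
        simp only [if_neg hβα]
        rw [hβ]
        rw [Finset.sum_range_succ, Finset.sum_range_succ]
        have hfi : (⟨i % m, Nat.mod_lt i hm⟩ : Fin m) = i' := rfl
        have key : w (α + hstep) - p - h • (∑ j ∈ Finset.range i, aa hm a j • f ⟨j % m, Nat.mod_lt j hm⟩ p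
              + aa hm a i • f i' p)
            = (w (α + hstep) - z - hstep • f i' z)
              + (z - p - h • ∑ j ∈ Finset.range i, aa hm a j • f ⟨j % m, Nat.mod_lt j hm⟩ p)
              + ((aa hm a i * h) • f i' z - (aa hm a i * h) • f i' p) := by
          rw [hsteph, smul_add, smul_smul, mul_comm h (aa hm a i)]
          abel
        rw [hfi, key]
        have hwK : w (α + hstep) ∈ K ∨ True := Or.inr trivial
        have e1 : ‖w (α + hstep) - z - hstep • f i' z‖ ≤ (L : ℝ) * M * (aa hm a i) ^ 2 * h ^ 2 := by
          calc ‖w (α + hstep) - z - hstep • f i' z‖ ≤ (L : ℝ) * M * hstep ^ 2 := hwtaylor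
            _ = (L : ℝ) * M * (aa hm a i) ^ 2 * h ^ 2 := by rw [hsteph]; ring
        have e3 : ‖(aa hm a i * h) • f i' z - (aa hm a i * h) • f i' p‖
            ≤ 2 * (L : ℝ) * M * A * aa hm a i * h ^ 2 := by
          rw [← smul_sub, norm_smul, Real.norm_eq_abs,
            abs_of_pos (mul_pos (aa_pos hm ha i) hh0)]
          have hlz : ‖f i' z - f i' p‖ ≤ (L : ℝ) * ‖z - p‖ := by
            have := (hlip i').dist_le_mul z hzK p hpK
            rw [dist_eq_norm, dist_eq_norm] at this
            exact this
          calc aa hm a i * h * ‖f i' z - f i' p‖ ≤ aa hm a i * h * ((L:ℝ) * (2 * A * M * h)) := by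
                apply mul_le_mul_of_nonneg_left _ (mul_pos (aa_pos hm ha i) hh0).le
                exact le_trans hlz (mul_le_mul_of_nonneg_left hzp hL0)
            _ = 2 * (L : ℝ) * M * A * aa hm a i * h ^ 2 := by ring
        calc ‖(w (α + hstep) - z - hstep • f i' z)
              + (z - p - h • ∑ j ∈ Finset.range i, aa hm a j • f ⟨j % m, Nat.mod_lt j hm⟩ p)
              + ((aa hm a i * h) • f i' z - (aa hm a i * h) • f i' p)‖
            ≤ ‖(w (α + hstep) - z - hstep • f i' z)
              + (z - p - h • ∑ j ∈ Finset.range i, aa hm a j • f ⟨j % m, Nat.mod_lt j hm⟩ p)‖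
              + ‖(aa hm a i * h) • f i' z - (aa hm a i * h) • f i' p‖ := norm_add_le _ _
          _ ≤ ‖w (α + hstep) - z - hstep • f i' z‖
              + ‖z - p - h • ∑ j ∈ Finset.range i, aa hm a j • f ⟨j % m, Nat.mod_lt j hm⟩ p‖
              + ‖(aa hm a i * h) • f i' z - (aa hm a i * h) • f i' p‖ := by
              apply add_le_add_left (norm_add_le _ _)
          _ ≤ ((L : ℝ) * M * (aa hm a i) ^ 2 * h ^ 2)
              + ((L : ℝ) * M * h ^ 2 * ∑ j ∈ Finset.range i, (aa hm a j ^ 2 + 2 * aa hm a j * A))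
              + (2 * (L : ℝ) * M * A * aa hm a i * h ^ 2) := by
              exact add_le_add (add_le_add e1 huerr) e3
          _ = (L : ℝ) * M * h ^ 2 * ((∑ j ∈ Finset.range i, (aa hm a j ^ 2 + 2 * aa hm a j * A))
              + (aa hm a i ^ 2 + 2 * aa hm a i * A)) := by ring
  -- conclude the cycle estimate
  obtain ⟨u, hu0, hucont, huderiv, huerr⟩ := claim m le_rfl
  have hcm1 : (c + 1) * m = c * m + m := Nat.succ_mul c m
  set Fp := ∑ i, a i • f i p with hFpdef
  set Fq := ∑ i, a i • f i q with hFqdef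
  have hFsum : ∑ j ∈ Finset.range m, aa hm a j • f ⟨j % m, Nat.mod_lt j hm⟩ p = Fp := by
    rw [hFpdef, ← Fin.sum_univ_eq_sum_range (fun j => aa hm a j • f ⟨j % m, Nat.mod_lt j hm⟩ p) m]
    apply Finset.sum_congr rfl
    intro i _
    have hieq : (⟨(i : ℕ) % m, Nat.mod_lt _ hm⟩ : Fin m) = i := by
      apply Fin.ext
      exact Nat.mod_eq_of_lt i.isLt
    show aa hm a i • f ⟨(i : ℕ) % m, Nat.mod_lt _ hm⟩ p = a i • f i p
    rw [hieq, aa_lt hm a i.isLt, Fin.eta]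
  -- Lipschitz bound for the combined field
  have hFlipK := sum_smul_lipschitzOnWith f a (fun i => (ha i).le) hlip
  have hFdist : ∀ z1 ∈ K, ∀ z2 ∈ K,
      ‖(∑ i, a i • f i z1) - ∑ i, a i • f i z2‖ ≤ A * (L : ℝ) * ‖z1 - z2‖ := by
    intro z1 h1 z2 h2
    have := hFlipK.dist_le_mul z1 h1 z2 h2
    rw [dist_eq_norm, dist_eq_norm] at this
    calc ‖(∑ i, a i • f i z1) - ∑ i, a i • f i z2‖
        ≤ (((∑ i, a i).toNNReal * L : NNReal) : ℝ) * ‖z1 - z2‖ := this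
      _ = A * (L : ℝ) * ‖z1 - z2‖ := by
          push_cast
          rw [Real.coe_toNNReal _ (by positivity)]
  have hFbdK : ∀ z ∈ K, ‖∑ i, a i • f i z‖ ≤ A * M := by
    intro z hz
    calc ‖∑ i, a i • f i z‖ ≤ ∑ i, ‖a i • f i z‖ := norm_sum_le _ _
      _ ≤ ∑ i, a i * M := by
          apply Finset.sum_le_sum
          intro i _
          rw [norm_smul, Real.norm_eq_abs, abs_of_pos (ha i)]
          exact mul_le_mul_of_nonneg_left (hbd i z hz) (ha i).le
      _ = A * M := by rw [← Finset.sum_mul]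
  -- Taylor estimate for the exact solution over one time step
  have hsub : Set.Icc ((c : ℝ) * h) (((c : ℝ) + 1) * h) ⊆ Set.Icc (0 : ℝ) τ :=
    fun t ht => ⟨le_trans hch.1 ht.1, le_trans ht.2 hch1.2⟩
  have hγcont : ContinuousOn γx (Set.Icc ((c : ℝ) * h) (((c : ℝ) + 1) * h)) :=
    fun t ht => ((hγx t (hsub ht)).continuousAt).continuousWithinAt
  have hγK : ∀ t ∈ Set.Icc ((c : ℝ) * h) (((c : ℝ) + 1) * h), γx t ∈ K :=
    fun t ht => htube t (hsub ht) (Metric.mem_closedBall_self hr.le)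
  have hγnear : ∀ t ∈ Set.Icc ((c : ℝ) * h) (((c : ℝ) + 1) * h),
      ‖γx t - q‖ ≤ A * M * (t - (c : ℝ) * h) := by
    intro t ht
    have := norm_image_sub_le_of_norm_deriv_right_le_segment
      (f := γx) (f' := fun t => ∑ i, a i • f i (γx t)) (C := A * M) hγcont
      (fun s hs => (hγx s (hsub ⟨hs.1, hs.2.le⟩)).hasDerivWithinAt)
      (fun s hs => hFbdK _ (hγK s ⟨hs.1, hs.2.le⟩)) t ht
    rwa [hqdef]
  have hc1c : ((c : ℝ) + 1) * h - (c : ℝ) * h = h := by ring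
  have hγtaylor : ‖γx (((c : ℝ) + 1) * h) - q - h • Fq‖ ≤ A * A * (L : ℝ) * M * h ^ 2 := by
    have hvderiv : ∀ s ∈ Set.Ico ((c : ℝ) * h) (((c : ℝ) + 1) * h),
        HasDerivWithinAt (fun t => γx t - t • Fq) ((∑ i, a i • f i (γx s)) - Fq)
          (Set.Ici s) s := by
      intro s hs
      refine ((hγx s (hsub ⟨hs.1, hs.2.le⟩)).hasDerivWithinAt).sub ?_
      have := (hasDerivAt_id s).smul_const Fq
      rw [one_smul] at this
      exact this.hasDerivWithinAt
    have hvbound : ∀ s ∈ Set.Ico ((c : ℝ) * h) (((c : ℝ) + 1) * h),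
        ‖(∑ i, a i • f i (γx s)) - Fq‖ ≤ A * (L : ℝ) * (A * M * h) := by
      intro s hs
      calc ‖(∑ i, a i • f i (γx s)) - Fq‖ ≤ A * (L : ℝ) * ‖γx s - q‖ :=
            hFdist _ (hγK s ⟨hs.1, hs.2.le⟩) _ hqK
        _ ≤ A * (L : ℝ) * (A * M * h) := by
            apply mul_le_mul_of_nonneg_left _ (by positivity)
            refine le_trans (hγnear s ⟨hs.1, hs.2.le⟩) ?_
            apply mul_le_mul_of_nonneg_left _ (by positivity)
            have := hs.2.le
            linarith [hc1c]
    have hvcont : ContinuousOn (fun t => γx t - t • Fq)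
        (Set.Icc ((c : ℝ) * h) (((c : ℝ) + 1) * h)) :=
      hγcont.sub (continuousOn_id.smul continuousOn_const)
    have := norm_image_sub_le_of_norm_deriv_right_le_segment
      (f := fun t => γx t - t • Fq) (f' := fun s => (∑ i, a i • f i (γx s)) - Fq)
      (C := A * (L : ℝ) * (A * M * h)) hvcont hvderiv hvbound
      (((c : ℝ) + 1) * h) ⟨by linarith [hc1c, hh0], le_rfl⟩
    beta_reduce at this
    rw [hc1c] at this
    have heq : γx (((c : ℝ) + 1) * h) - (((c : ℝ) + 1) * h) • Fq -
        (γx ((c : ℝ) * h) - ((c : ℝ) * h) • Fq)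
        = γx (((c : ℝ) + 1) * h) - q - h • Fq := by
      have hsmul : (((c : ℝ) + 1) * h) • Fq = ((c : ℝ) * h) • Fq + h • Fq := by
        rw [← add_smul]; congr 1; ring
      rw [hqdef, hsmul]
      abel
    rw [heq] at this
    calc ‖γx (((c : ℝ) + 1) * h) - q - h • Fq‖ ≤ A * (L : ℝ) * (A * M * h) * h := this
      _ = A * A * (L : ℝ) * M * h ^ 2 := by ring
  refine ⟨u, hu0, by rw [hcm1]; exact hucont, ?_, ?_⟩
  · intro k hk1 hk2
    exact huderiv k hk1 (by omega)
  · rw [hcm1]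
    rw [hFsum] at huerr
    have herr1 : ‖u (tt hm a τ n (c * m + m)) - p - h • Fp‖
        ≤ 3 * (L : ℝ) * M * A ^ 2 * h ^ 2 := by
      refine le_trans huerr ?_
      calc (L : ℝ) * M * h ^ 2 * ∑ j ∈ Finset.range m, (aa hm a j ^ 2 + 2 * aa hm a j * A)
          ≤ (L : ℝ) * M * h ^ 2 * (3 * A ^ 2) := by
            apply mul_le_mul_of_nonneg_left (hsum3 m le_rfl) (by positivity)
        _ = 3 * (L : ℝ) * M * A ^ 2 * h ^ 2 := by ring
    have herr2 : ‖(p - q) + (h • Fp - h • Fq)‖ ≤ (1 + A * (L : ℝ) * h) * ‖p - q‖ := by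
      calc ‖(p - q) + (h • Fp - h • Fq)‖ ≤ ‖p - q‖ + ‖h • Fp - h • Fq‖ := norm_add_le _ _
        _ ≤ ‖p - q‖ + h * (A * (L : ℝ) * ‖p - q‖) := by
            apply add_le_add_right
            rw [← smul_sub, norm_smul, Real.norm_eq_abs, abs_of_pos hh0]
            exact mul_le_mul_of_nonneg_left (hFdist p hpK q hqK) hh0.le
        _ = (1 + A * (L : ℝ) * h) * ‖p - q‖ := by ring
    have hdecomp : u (tt hm a τ n (c * m + m)) - γx (((c : ℝ) + 1) * h)
        = (u (tt hm a τ n (c * m + m)) - p - h • Fp)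
          + ((p - q) + (h • Fp - h • Fq))
          - (γx (((c : ℝ) + 1) * h) - q - h • Fq) := by abel
    calc ‖u (tt hm a τ n (c * m + m)) - γx (((c : ℝ) + 1) * h)‖
        = ‖(u (tt hm a τ n (c * m + m)) - p - h • Fp)
          + ((p - q) + (h • Fp - h • Fq))
          - (γx (((c : ℝ) + 1) * h) - q - h • Fq)‖ := by rw [hdecomp]
      _ ≤ ‖(u (tt hm a τ n (c * m + m)) - p - h • Fp)
          + ((p - q) + (h • Fp - h • Fq))‖
          + ‖γx (((c : ℝ) + 1) * h) - q - h • Fq‖ := norm_sub_le _ _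
      _ ≤ ‖u (tt hm a τ n (c * m + m)) - p - h • Fp‖
          + ‖(p - q) + (h • Fp - h • Fq)‖
          + ‖γx (((c : ℝ) + 1) * h) - q - h • Fq‖ := by
          apply add_le_add_left (norm_add_le _ _)
      _ ≤ (3 * (L : ℝ) * M * A ^ 2 * h ^ 2) + ((1 + A * (L : ℝ) * h) * ‖p - q‖)
          + (A * A * (L : ℝ) * M * h ^ 2) := add_le_add (add_le_add herr1 herr2) hγtaylor
      _ = (1 + A * (L : ℝ) * h) * ‖p - q‖ + 4 * (L : ℝ) * M * A ^ 2 * h ^ 2 := by ring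

set_option maxHeartbeats 1000000 in
lemma build_eta
    {E : Type*} [NormedAddCommGroup E] [NormedSpace ℝ E] [CompleteSpace E]
    {m n : ℕ} (hm : 0 < m) (hn : 0 < n)
    (f : Fin m → E → E) (a : Fin m → ℝ) (ha : ∀ i, 0 < a i)
    {τ : ℝ} (hτ : 0 < τ) {K : Set E} {L : NNReal} {M r : ℝ}
    (hlip : ∀ i, LipschitzOnWith L (f i) K)
    (hbd : ∀ i, ∀ z ∈ K, ‖f i z‖ ≤ M) (hM1 : 1 ≤ M) (hr : 0 < r)
    {γx : ℝ → E}
    (hγx : ∀ t ∈ Set.Icc 0 τ, HasDerivAt γx (∑ i, a i • f i (γx t)) t)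
    (htube : ∀ t ∈ Set.Icc 0 τ, Metric.closedBall (γx t) r ⊆ K)
    (hs1 : ∀ i, M * (a i * (τ / n)) ≤ r / 4)
    (hs2 : M * (∑ i, a i) * (τ / n) ≤ r / 8)
    (hs4 : 3 * (L : ℝ) * (∑ i, a i) * (τ / n) ≤ 1)
    (hB : 4 * (L : ℝ) * M * (∑ i, a i) ^ 2 * (τ / n) ^ 2 *
      (n * Real.exp ((∑ i, a i) * L * τ)) ≤ r / 4) :
    ∃ η : ℝ → E, η 0 = γx 0 ∧
      ContinuousOn η (Set.Icc 0 (tt hm a τ n (n * m))) ∧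
      (∀ k < n * m, ∀ t ∈ Set.Ioo (tt hm a τ n k) (tt hm a τ n (k + 1)),
        HasDerivAt η (f ⟨k % m, Nat.mod_lt k hm⟩ (η t)) t) ∧
      ‖η (tt hm a τ n (n * m)) - γx τ‖ ≤
        4 * (L : ℝ) * M * (∑ i, a i) ^ 2 * (τ / n) ^ 2 *
          (n * Real.exp ((∑ i, a i) * L * τ)) := by
  have hM0 : (0:ℝ) < M := lt_of_lt_of_le one_pos hM1
  have hL0 : (0:ℝ) ≤ L := L.coe_nonneg
  haveI : Nonempty (Fin m) := ⟨⟨0, hm⟩⟩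
  set A := ∑ i, a i with hAdef
  have hA0 : 0 < A := Finset.sum_pos (fun i _ => ha i) Finset.univ_nonempty
  set h := τ / n with hhdef
  have hh0 : 0 < h := div_pos hτ (by exact_mod_cast hn)
  have hnh : (n : ℝ) * h = τ := by rw [hhdef]; field_simp
  set x0 := (1 : ℝ) + A * (L : ℝ) * h with hx0def
  have hx1 : (1:ℝ) ≤ x0 := by
    rw [hx0def]
    have : 0 ≤ A * (L:ℝ) * h := by positivity
    linarith
  set C2 := 4 * (L : ℝ) * M * A ^ 2 * h ^ 2 with hC2def
  have hC20 : 0 ≤ C2 := by rw [hC2def]; positivity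
  set Bnd := C2 * (n * Real.exp (A * L * τ)) with hBnddef
  have hEle : ∀ c ≤ n, C2 * ∑ j ∈ Finset.range c, x0 ^ j ≤ Bnd := by
    intro c hcn
    rw [hBnddef]
    apply mul_le_mul_of_nonneg_left _ hC20
    have hxn : x0 ^ n ≤ Real.exp (A * L * τ) := by
      have h1 : x0 ≤ Real.exp (A * (L:ℝ) * h) := by
        rw [hx0def, add_comm]
        exact Real.add_one_le_exp _
      calc x0 ^ n ≤ (Real.exp (A * (L:ℝ) * h)) ^ n :=
            pow_le_pow_left₀ (by linarith) h1 n
        _ = Real.exp ((n : ℝ) * (A * (L:ℝ) * h)) := (Real.exp_nat_mul _ n).symm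
        _ = Real.exp (A * L * τ) := by rw [← hnh]; ring_nf
    calc ∑ j ∈ Finset.range c, x0 ^ j ≤ ∑ j ∈ Finset.range c, x0 ^ n := by
          apply Finset.sum_le_sum
          intro j hj
          exact pow_le_pow_right₀ hx1 (le_trans (Finset.mem_range.1 hj).le hcn)
      _ = c * x0 ^ n := by rw [Finset.sum_const, Finset.card_range]; ring
      _ ≤ n * x0 ^ n := by
          apply mul_le_mul_of_nonneg_right _ (by positivity)
          exact_mod_cast hcn
      _ ≤ n * Real.exp (A * L * τ) := by
          apply mul_le_mul_of_nonneg_left hxn (by positivity)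
  have htt0 : tt hm a τ n 0 = 0 := Finset.sum_range_zero _
  -- main induction on cycles
  have main : ∀ c ≤ n, ∃ η : ℝ → E, η 0 = γx 0 ∧
      ContinuousOn η (Set.Icc 0 (tt hm a τ n (c * m))) ∧
      (∀ k < c * m, ∀ t ∈ Set.Ioo (tt hm a τ n k) (tt hm a τ n (k + 1)),
        HasDerivAt η (f ⟨k % m, Nat.mod_lt k hm⟩ (η t)) t) ∧
      ‖η (tt hm a τ n (c * m)) - γx ((c : ℝ) * h)‖ ≤ C2 * ∑ j ∈ Finset.range c, x0 ^ j := by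
    intro c
    induction c with
    | zero =>
      intro _
      refine ⟨fun _ => γx 0, rfl, ?_, ?_, ?_⟩
      · exact continuousOn_const
      · intro k hk; exact absurd hk (by omega)
      · simp [htt0]
    | succ c ihc =>
      intro hc1
      have hc : c < n := hc1
      obtain ⟨η, hη0, hηcont, hηderiv, hηerr⟩ := ihc hc.le
      set p := η (tt hm a τ n (c * m)) with hpdef
      have hEc : C2 * ∑ j ∈ Finset.range c, x0 ^ j ≤ r / 4 :=
        le_trans (hEle c hc.le) hB
      have hp : ‖p - γx ((c : ℝ) * h)‖ ≤ r / 4 := le_trans hηerr hEc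
      obtain ⟨u, hu0, hucont, huderiv, huerr⟩ :=
        cycle_step hm hn f a ha hτ hlip hbd hM1 hr hγx htube hc hs1 hs2 hs4 hp
      set T1 := tt hm a τ n (c * m) with hT1def
      set T2 := tt hm a τ n ((c + 1) * m) with hT2def
      have hT1nonneg : 0 ≤ T1 := by
        rw [hT1def, ← htt0]
        exact tt_mono hm ha hτ.le n (Nat.zero_le _)
      have hT12 : T1 < T2 := by
        rw [hT1def, hT2def]
        calc tt hm a τ n (c * m) < tt hm a τ n (c * m + 1) := tt_strict hm ha hτ hn _
          _ ≤ tt hm a τ n ((c + 1) * m) := tt_mono hm ha hτ.le n (by rw [Nat.succ_mul]; omega)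
      refine ⟨fun t => if t ≤ T1 then η t else u t, ?_, ?_, ?_, ?_⟩
      · simp only [if_pos hT1nonneg]
        exact hη0
      · exact continuousOn_glue hT1nonneg hT12.le hηcont hucont hu0.symm
      · intro k hk t ht
        rcases Nat.lt_or_ge k (c * m) with hklt | hkge
        · have htT1 : t < T1 := lt_of_lt_of_le ht.2 (tt_mono hm ha hτ.le n hklt)
          have hvt : (fun t => if t ≤ T1 then η t else u t) t = η t := if_pos htT1.le
          have ev : (fun t => if t ≤ T1 then η t else u t) =ᶠ[nhds t] η := by
            filter_upwards [Iio_mem_nhds htT1] with s hs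
            exact if_pos (le_of_lt hs)
          rw [hvt]
          exact (hηderiv k hklt t ht).congr_of_eventuallyEq ev
        · have htT1 : T1 < t := lt_of_le_of_lt (tt_mono hm ha hτ.le n hkge) ht.1
          have hvt : (fun t => if t ≤ T1 then η t else u t) t = u t := if_neg (not_le.2 htT1)
          have ev : (fun t => if t ≤ T1 then η t else u t) =ᶠ[nhds t] u := by
            filter_upwards [Ioi_mem_nhds htT1] with s hs
            exact if_neg (not_le.2 hs)
          rw [hvt]
          exact (huderiv k hkge hk t ht).congr_of_eventuallyEq ev
      · have hvt : (fun t => if t ≤ T1 then η t else u t) T2 = u T2 := if_neg (not_le.2 hT12)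
        rw [hvt]
        have hcast : ((c : ℝ) + 1) * h = (((c + 1 : ℕ) : ℝ)) * h := by push_cast; ring
        calc ‖u T2 - γx (((c + 1 : ℕ) : ℝ) * h)‖
            = ‖u T2 - γx (((c : ℝ) + 1) * h)‖ := by rw [hcast]
          _ ≤ (1 + A * L * h) * ‖p - γx ((c : ℝ) * h)‖ + 4 * L * M * A ^ 2 * h ^ 2 := huerr
          _ ≤ (1 + A * L * h) * (C2 * ∑ j ∈ Finset.range c, x0 ^ j)
              + 4 * L * M * A ^ 2 * h ^ 2 := by
              apply add_le_add_left
              apply mul_le_mul_of_nonneg_left hηerr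
              have : 0 ≤ A * (L:ℝ) * h := by positivity
              linarith
          _ = C2 * ∑ j ∈ Finset.range (c + 1), x0 ^ j := by
              rw [geom_sum_succ, hx0def, hC2def]; ring
  obtain ⟨η, hη0, hηcont, hηderiv, hηerr⟩ := main n le_rfl
  refine ⟨η, hη0, hηcont, hηderiv, ?_⟩
  have hfinal :
    ‖η (tt hm a τ n (n * m)) - γx τ‖ ≤ Bnd := by
    calc ‖η (tt hm a τ n (n * m)) - γx τ‖ = ‖η (tt hm a τ n (n * m)) - γx ((n : ℝ) * h)‖ := by
          rw [hnh]
      _ ≤ C2 * ∑ j ∈ Finset.range n, x0 ^ j := hηerr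
      _ ≤ Bnd := hEle n le_rfl
  exact hfinal

lemma LipschitzOnWith.weaken' {K K' : NNReal} {α β : Type*} [PseudoEMetricSpace α]
    [PseudoEMetricSpace β] {f : α → β} {s : Set α} (h : LipschitzOnWith K f s) (hK : K ≤ K') :
    LipschitzOnWith K' f s := fun x hx y hy =>
  le_trans (h hx hy) (mul_le_mul_left (by exact_mod_cast hK) _)


set_option maxHeartbeats 1000000 in
/-- operator splitting: the flow of `f = a₁ f₁ + ⋯ + a_m f_m` is approximated by
cycling `n` times through the flows of `f₁, …, f_m` for times `a₁ τ/n, …, a_m τ/n`. -/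
theorem splitting_approximation
    (d : ℕ) (hd : 1 ≤ d) (m : ℕ) (hm : 0 < m)
    (f : Fin m → Euc d → Euc d) (hf : ∀ i, LocallyLipschitz (f i))
    (a : Fin m → ℝ) (ha : ∀ i, 0 < a i)
    (τ : ℝ) (hτ : 0 ≤ τ) (Ω : Set (Euc d)) (hΩ : IsCompact Ω)
    (γ : Euc d → ℝ → Euc d)
    (hγ0 : ∀ x ∈ Ω, γ x 0 = x)
    (hγ : ∀ x ∈ Ω, ∀ t ∈ Set.Icc (0 : ℝ) τ,
      HasDerivAt (γ x) (∑ i, a i • f i (γ x t)) t)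
    (ε : ℝ) (hε : 0 < ε) :
    ∃ n : ℕ, 0 < n ∧ ∀ x ∈ Ω, ∃ η : ℝ → Euc d,
      IsPiecewiseSolution (m * n) (fun k => f ⟨k % m, Nat.mod_lt k hm⟩)
        (fun k => a ⟨k % m, Nat.mod_lt k hm⟩ * τ / n) x η ∧
      ‖η (∑ j ∈ Finset.range (m * n), a ⟨j % m, Nat.mod_lt j hm⟩ * τ / n) - γ x τ‖ ≤ ε := by
  haveI : Nonempty (Fin m) := ⟨⟨0, hm⟩⟩
  rcases eq_or_lt_of_le hτ with rfl | hτ0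
  -- trivial case τ = 0
  · refine ⟨1, one_pos, fun x hx => ⟨fun _ => x, ⟨continuousOn_const, rfl, ?_⟩, ?_⟩⟩
    · intro i hi t ht
      exfalso
      have h0 : ∀ k : ℕ, (∑ j ∈ Finset.range k, a ⟨j % m, Nat.mod_lt j hm⟩ * (0:ℝ) / (1:ℕ)) = 0 := by
        intro k
        simp
      rw [h0, h0] at ht
      exact absurd ht.2 (not_lt.2 ht.1.le)
    · rw [hγ0 x hx]
      simp [hε.le]
  -- main case τ > 0
  have hA0 : (0:ℝ) < ∑ i, a i := Finset.sum_pos (fun i _ => ha i) Finset.univ_nonempty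
  set A := ∑ i, a i with hAdef
  -- a compact set K containing uniform neighbourhoods of all trajectories
  have hFlipC : ∀ C : Set (Euc d), IsCompact C →
      ∃ L : NNReal, LipschitzOnWith L (fun z => ∑ i, a i • f i z) C := by
    intro C hC
    have hLi : ∀ i : Fin m, ∃ Li : NNReal, LipschitzOnWith Li (f i) C :=
      fun i => (hf i).exists_lipschitzOnWith_isCompact hC
    choose Li hLi using hLi
    refine ⟨(A.toNNReal) * Finset.univ.sup Li, ?_⟩
    exact sum_smul_lipschitzOnWith f a (fun i => (ha i).le)
      (fun i => (hLi i).weaken' (Finset.le_sup (Finset.mem_univ i)))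
  obtain ⟨K, hKc, htube⟩ := exists_tube hFlipC hΩ hτ hγ0 hγ
  -- uniform Lipschitz constant and bound on K
  have hLi : ∀ i : Fin m, ∃ Li : NNReal, LipschitzOnWith Li (f i) K :=
    fun i => (hf i).exists_lipschitzOnWith_isCompact hKc
  choose Li hLiK using hLi
  set L : NNReal := Finset.univ.sup Li with hLdef
  have hlip : ∀ i, LipschitzOnWith L (f i) K :=
    fun i => (hLiK i).weaken' (Finset.le_sup (Finset.mem_univ i))
  have hCi : ∀ i : Fin m, ∃ Ci : ℝ, ∀ z ∈ K, ‖f i z‖ ≤ Ci :=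
    fun i => hKc.exists_bound_of_continuousOn (hf i).continuous.continuousOn
  choose Ci hCiK using hCi
  set M : ℝ := 1 + ∑ i, max (Ci i) 0 with hMdef
  have hM1 : (1:ℝ) ≤ M := by
    rw [hMdef]
    have : (0:ℝ) ≤ ∑ i, max (Ci i) 0 := Finset.sum_nonneg fun i _ => le_max_right _ _
    linarith
  have hbd : ∀ i, ∀ z ∈ K, ‖f i z‖ ≤ M := by
    intro i z hz
    calc ‖f i z‖ ≤ Ci i := hCiK i z hz
      _ ≤ max (Ci i) 0 := le_max_left _ _
      _ ≤ ∑ i, max (Ci i) 0 :=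
          Finset.single_le_sum (f := fun i => max (Ci i) 0)
            (fun i _ => le_max_right _ _) (Finset.mem_univ i)
      _ ≤ M := by rw [hMdef]; linarith
  have hM0 : (0:ℝ) < M := lt_of_lt_of_le one_pos hM1
  have hL0 : (0:ℝ) ≤ L := L.coe_nonneg
  set r : ℝ := 1/4 with hrdef
  have hr : (0:ℝ) < r := by norm_num [hrdef]
  -- choose n large enough
  have hdiv : ∀ c b : ℝ, 0 < b → ∀ᶠ n : ℕ in Filter.atTop, c / n ≤ b := by
    intro c b hb
    exact ((tendsto_const_div_atTop_nhds_zero_nat c).eventually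
      (Iio_mem_nhds hb)).mono fun n h => (le_of_lt h)
  have hev1 : ∀ᶠ n : ℕ in Filter.atTop, ∀ i : Fin m, M * (a i * (τ / n)) ≤ r / 4 := by
    rw [Filter.eventually_all]
    intro i
    filter_upwards [hdiv (M * (a i * τ)) (r/4) (by linarith)] with n hn
    calc M * (a i * (τ / n)) = M * (a i * τ) / n := by ring
      _ ≤ r / 4 := hn
  have hev2 : ∀ᶠ n : ℕ in Filter.atTop, M * A * (τ / n) ≤ r / 8 := by
    filter_upwards [hdiv (M * A * τ) (r/8) (by linarith)] with n hn
    calc M * A * (τ / n) = M * A * τ / n := by ring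
      _ ≤ r / 8 := hn
  have hev4 : ∀ᶠ n : ℕ in Filter.atTop, 3 * (L:ℝ) * A * (τ / n) ≤ 1 := by
    filter_upwards [hdiv (3 * (L:ℝ) * A * τ) 1 one_pos] with n hn
    calc 3 * (L:ℝ) * A * (τ / n) = 3 * (L:ℝ) * A * τ / n := by ring
      _ ≤ 1 := hn
  have hevB : ∀ᶠ n : ℕ in Filter.atTop,
      (0 < n) ∧ 4 * (L:ℝ) * M * A ^ 2 * (τ / n) ^ 2 * (n * Real.exp (A * L * τ))
        ≤ min (r/4) ε := by
    have hmin : 0 < min (r/4) ε := lt_min (by linarith) hε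
    filter_upwards [hdiv (4 * (L:ℝ) * M * A ^ 2 * τ ^ 2 * Real.exp (A * L * τ)) _ hmin,
      Filter.eventually_gt_atTop 0] with n hn hn0
    refine ⟨hn0, ?_⟩
    have hne : (n:ℝ) ≠ 0 := by exact_mod_cast hn0.ne'
    calc 4 * (L:ℝ) * M * A ^ 2 * (τ / n) ^ 2 * (n * Real.exp (A * L * τ))
        = 4 * (L:ℝ) * M * A ^ 2 * τ ^ 2 * Real.exp (A * L * τ) / n := by
          field_simp
      _ ≤ min (r/4) ε := hn
  obtain ⟨n, hn⟩ := (hev1.and (hev2.and (hev4.and hevB))).exists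
  obtain ⟨hn1, hn2, hn4, hn0, hnB⟩ := hn
  refine ⟨n, hn0, fun x hx => ?_⟩
  have hγx0 : γ x 0 = x := hγ0 x hx
  obtain ⟨η, hη0, hηcont, hηderiv, hηerr⟩ :=
    build_eta (γx := γ x) hm hn0 f a ha hτ0 hlip hbd hM1 hr (hγ x hx)
      (fun t ht => htube x hx t ht) hn1 hn2 hn4
      (le_trans hnB (min_le_left _ _))
  have hmn : m * n = n * m := Nat.mul_comm m n
  refine ⟨η, ⟨?_, ?_, ?_⟩, ?_⟩
  · rw [hmn]
    exact hηcont
  · rw [hγx0] at hη0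
    exact hη0
  · intro i hi t ht
    exact hηderiv i (by omega) t ht
  · rw [hmn]
    refine le_trans ?_ (le_trans hnB (min_le_right _ _))
    rw [hγx0] at hη0
    exact hηerr
end
end

section
/- Let f : ℝ → ℝ be continuous and not a polynomial function. Then there exists c ∈ ℝ such that the function x ↦ f(x + c) − f(x) is not a polynomial function. -/
open Polynomial

lemma antideriv_exists (r : ℝ[X]) : ∃ R : ℝ[X], Polynomial.derivative R = r := by
  induction r using Polynomial.induction_on' with
  | add p q hp hq =>
    obtain ⟨P, hP⟩ := hp; obtain ⟨Q, hQ⟩ := hq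
    exact ⟨P + Q, by simp [hP, hQ]⟩
  | monomial n a =>
    refine ⟨monomial (n+1) (a / (n+1)), ?_⟩
    rw [derivative_monomial]
    simp only [Nat.add_sub_cancel, Nat.cast_add, Nat.cast_one]
    rw [div_mul_cancel₀]
    positivity

lemma coeff_taylor_sub (q : ℝ[X]) (hq : q.natDegree ≠ 0) :
    (Polynomial.taylor (1:ℝ) q - q).coeff (q.natDegree - 1)
      = q.natDegree * q.coeff q.natDegree := by
  set d := q.natDegree with hd
  have hd1 : 1 ≤ d := Nat.one_le_iff_ne_zero.2 hq
  have hh : Polynomial.hasseDeriv (d-1) q = C (q.coeff (d-1)) + C (d * q.coeff d) * X := by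
    ext n
    rw [Polynomial.hasseDeriv_coeff]
    match n with
    | 0 => simp
    | 1 =>
      have h1 : (1 + (d-1)).choose (d-1) = d := by
        rw [Nat.add_comm, Nat.sub_add_cancel hd1, Nat.choose_symm hd1]
        simp [Nat.sub_sub_self hd1]
      have h2 : 1 + (d - 1) = d := by omega
      rw [h1, h2]
      simp [mul_comm]
    | (n+2) =>
      have h3 : q.coeff (n + 2 + (d-1)) = 0 := by
        apply Polynomial.coeff_eq_zero_of_natDegree_lt; omega
      simp [h3, Polynomial.coeff_C, Polynomial.coeff_X]
  rw [Polynomial.coeff_sub, Polynomial.taylor_coeff, hh]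
  have h4 : q.coeff (d - 1) + (d * q.coeff d) * 1 - q.coeff (d-1) = d * q.coeff d := by ring
  simpa using h4

/-- if `f : ℝ → ℝ` is continuous and not a polynomial function, then there is a
shift `c` such that `x ↦ f(x + c) − f(x)` is not a polynomial function either. -/
theorem exists_shift_difference_not_polynomial
    (f : ℝ → ℝ) (hf : Continuous f)
    (hnp : ¬ ∃ p : Polynomial ℝ, ∀ x : ℝ, f x = p.eval x) :
    ∃ c : ℝ, ¬ ∃ p : Polynomial ℝ, ∀ x : ℝ, f (x + c) - f x = p.eval x := by
  by_contra hcon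
  push_neg at hcon
  apply hnp
  choose p hp using hcon
  set n := (p 1).natDegree with hn
  -- the commuting-differences identity, as polynomials
  have key : ∀ c : ℝ, Polynomial.taylor (1:ℝ) (p c) - p c = Polynomial.taylor c (p 1) - p 1 := by
    intro c
    apply Polynomial.funext
    intro x
    simp only [Polynomial.eval_sub, Polynomial.taylor_eval]
    have h1 := hp c (x+1)
    have h2 := hp c x
    have h3 := hp 1 (x+c)
    have h4 := hp 1 x
    have e1 : x + 1 + c = x + c + 1 := by ring
    rw [e1] at h1
    linarith
  -- uniform degree bound
  have hdeg : ∀ c : ℝ, (p c).natDegree ≤ n + 1 := by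
    intro c
    by_contra hbig
    push_neg at hbig
    have hne : (p c).natDegree ≠ 0 := by omega
    have hc := coeff_taylor_sub (p c) hne
    have hpc0 : p c ≠ 0 := fun h => hne (by rw [h]; simp)
    have hlc : (p c).coeff (p c).natDegree ≠ 0 := Polynomial.leadingCoeff_ne_zero.2 hpc0
    have hcoeff_ne : (Polynomial.taylor (1:ℝ) (p c) - p c).coeff ((p c).natDegree - 1) ≠ 0 := by
      rw [hc]
      exact mul_ne_zero (Nat.cast_ne_zero.2 hne) hlc
    have hle := Polynomial.le_natDegree_of_ne_zero hcoeff_ne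
    rw [key c] at hle
    have hub : (Polynomial.taylor c (p 1) - p 1).natDegree ≤ n := by
      refine le_trans (Polynomial.natDegree_sub_le _ _) ?_
      simp [Polynomial.natDegree_taylor]
      exact hn.symm.le
    omega
  -- Lagrange representation
  have hinj : Set.InjOn (fun i : ℕ => (i:ℝ)) (Finset.range (n+2)) :=
    fun a _ b _ h => Nat.cast_injective h
  have hrep : ∀ c : ℝ, p c =
      Lagrange.interpolate (Finset.range (n+2)) (fun i : ℕ => (i:ℝ))
        (fun i => (p c).eval (i:ℝ)) := by
    intro c
    apply Lagrange.eq_interpolate hinj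
    rw [Finset.card_range]
    refine lt_of_le_of_lt Polynomial.degree_le_natDegree ?_
    exact_mod_cast Nat.lt_succ_of_le (hdeg c)
  have hev : ∀ c x : ℝ, f (x + c) - f x = ∑ i ∈ Finset.range (n+2),
      (f ((i:ℝ) + c) - f (i:ℝ)) *
        (Lagrange.basis (Finset.range (n+2)) (fun j : ℕ => (j:ℝ)) i).eval x := by
    intro c x
    rw [hp c x]
    conv_lhs => rw [hrep c]
    rw [Lagrange.interpolate_apply, Polynomial.eval_finset_sum]
    refine Finset.sum_congr rfl fun i _ => ?_
    rw [Polynomial.eval_mul, Polynomial.eval_C, ← hp c (i:ℝ)]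
  -- the averaged difference is a polynomial
  set A : ℕ → ℝ := fun i => ∫ t in (0:ℝ)..1, (f ((i:ℝ) + t) - f (i:ℝ)) with hA
  set Q : Polynomial ℝ := ∑ i ∈ Finset.range (n+2),
      Polynomial.C (A i) * Lagrange.basis (Finset.range (n+2)) (fun j : ℕ => (j:ℝ)) i with hQdef
  have hint : ∀ y : ℝ, IntervalIntegrable (fun t => f (y + t) - f y)
      MeasureTheory.volume 0 1 := by
    intro y
    exact ((hf.comp (continuous_const.add continuous_id)).sub continuous_const).intervalIntegrable 0 1
  have hQ : ∀ x : ℝ, (∫ t in (0:ℝ)..1, (f (x + t) - f x)) = Q.eval x := by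
    intro x
    have step1 : (∫ t in (0:ℝ)..1, (f (x + t) - f x))
        = ∫ t in (0:ℝ)..1, ∑ i ∈ Finset.range (n+2),
          (f ((i:ℝ) + t) - f (i:ℝ)) *
            (Lagrange.basis (Finset.range (n+2)) (fun j : ℕ => (j:ℝ)) i).eval x := by
      apply intervalIntegral.integral_congr
      intro t _
      exact hev t x
    rw [step1, intervalIntegral.integral_finset_sum]
    · rw [hQdef]
      rw [Polynomial.eval_finset_sum]
      refine Finset.sum_congr rfl fun i _ => ?_
      rw [Polynomial.eval_mul, Polynomial.eval_C, intervalIntegral.integral_mul_const]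
    · intro i _
      exact (hint (i:ℝ)).mul_const _
  -- antiderivative of f and FTC
  set F : ℝ → ℝ := fun x => ∫ t in (0:ℝ)..x, f t with hF
  have hFder : ∀ x : ℝ, HasDerivAt F (f x) x := by
    intro x
    exact intervalIntegral.integral_hasDerivAt_right (hf.intervalIntegrable 0 x)
      (hf.stronglyMeasurable.stronglyMeasurableAtFilter :
        StronglyMeasurableAtFilter f (nhds x) MeasureTheory.volume) hf.continuousAt
  have hFshift : ∀ x : ℝ, (∫ t in (0:ℝ)..1, f (x + t)) = F (x+1) - F x := by
    intro x
    rw [intervalIntegral.integral_comp_add_left f x, add_zero]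
    have h := intervalIntegral.integral_interval_sub_left (μ := MeasureTheory.volume)
      (hf.intervalIntegrable 0 (x+1)) (hf.intervalIntegrable 0 x)
    rw [hF]
    linarith [h]
  have hsplit : ∀ x : ℝ, f x = F (x+1) - F x - Q.eval x := by
    intro x
    have h1 : (∫ t in (0:ℝ)..1, (f (x + t) - f x))
        = (∫ t in (0:ℝ)..1, f (x + t)) - ∫ t in (0:ℝ)..1, (f x : ℝ) :=
      intervalIntegral.integral_sub
        ((hf.comp (continuous_const.add continuous_id')).intervalIntegrable 0 1)
        intervalIntegrable_const
    have h2 : (∫ t in (0:ℝ)..1, (f x : ℝ)) = f x := by simp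
    have h3 := hQ x
    have h4 := hFshift x
    rw [h1, h2, h4] at h3
    linarith
  -- f is differentiable with polynomial derivative
  have hder : ∀ x : ℝ, HasDerivAt f (((p 1) - Polynomial.derivative Q).eval x) x := by
    intro x
    have hF1 : HasDerivAt (fun y : ℝ => F (y+1)) (f (x+1)) x := by
      have h := (hFder (x+1)).comp x ((hasDerivAt_id x).add_const 1)
      have h2 : HasDerivAt (F ∘ fun x => x + 1) (f (x + 1)) x := by simpa using h
      exact h2
    have hQd : HasDerivAt (fun y : ℝ => Q.eval y) ((Polynomial.derivative Q).eval x) x :=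
      Q.hasDerivAt x
    have hcomb : HasDerivAt (fun y : ℝ => F (y+1) - F y - Q.eval y)
        (f (x+1) - f x - (Polynomial.derivative Q).eval x) x :=
      (hF1.sub (hFder x)).sub hQd
    have hfd : HasDerivAt f (f (x+1) - f x - (Polynomial.derivative Q).eval x) x := by
      apply hcomb.congr_of_eventuallyEq
      filter_upwards with y using hsplit y
    rw [Polynomial.eval_sub, ← hp 1 x]
    exact hfd
  obtain ⟨R, hR⟩ := antideriv_exists ((p 1) - Polynomial.derivative Q)
  have hgder : ∀ x : ℝ, HasDerivAt (fun y => f y - R.eval y) 0 x := by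
    intro x
    have h := (hder x).sub (R.hasDerivAt x)
    rw [hR] at h
    have h2 : HasDerivAt (f - fun x => eval x R) 0 x := by simpa using h
    exact h2
  have hg : ∀ x : ℝ, f x - R.eval x = f 0 - R.eval 0 := by
    intro x
    exact is_const_of_deriv_eq_zero (fun y => (hgder y).differentiableAt)
      (fun y => (hgder y).deriv) x 0
  refine ⟨R + Polynomial.C (f 0 - R.eval 0), fun x => ?_⟩
  have := hg x
  rw [Polynomial.eval_add, Polynomial.eval_C]
  linarith
end

section
/- Let f : ℝ → ℝ be continuous, let c ≠ 0, and suppose the function x ↦ f(x + c) − f(x) is a polynomial function. Then there exist a polynomial Q ∈ ℝ[X] and a continuous function g : ℝ → ℝ with g(x + c) = g(x) for all x ∈ ℝ, such that f(x) = g(x) + Q(x) for all x ∈ ℝ. -/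
open Polynomial

lemma shift_exists (c : ℝ) (hc : c ≠ 0) (P : Polynomial ℝ) :
    ∃ Q : Polynomial ℝ, Q.comp (X + C c) - Q = P := by
  suffices h : ∀ n : ℕ, ∀ P : Polynomial ℝ, P.natDegree = n →
      ∃ Q : Polynomial ℝ, Q.comp (X + C c) - Q = P from h P.natDegree P rfl
  intro n
  induction n using Nat.strong_induction_on with
  | _ n ih =>
  intro P hn
  by_cases hP : P = 0
  · exact ⟨0, by simp [hP]⟩
  · set b : ℝ := P.leadingCoeff / ((n + 1) * c) with hb
    set Q₀ : Polynomial ℝ := C b * X ^ (n + 1) with hQ₀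
    set R : Polynomial ℝ := P - (Q₀.comp (X + C c) - Q₀) with hRdef
    have hcomp : Q₀.comp (X + C c) = C b * (X + C c) ^ (n + 1) := by
      simp [hQ₀]
    have hcoeff : ∀ k, n ≤ k → R.coeff k = 0 := by
      intro k hk
      rcases eq_or_lt_of_le hk with hk' | hk'
      · -- k = n
        subst hk'
        have h1 : (Q₀.comp (X + C c)).coeff n = b * (c * (n + 1)) := by
          rw [hcomp, coeff_C_mul, coeff_X_add_C_pow]
          simp [Nat.choose_succ_self_right]
        have h2 : Q₀.coeff n = 0 := by
          rw [hQ₀, coeff_C_mul, coeff_X_pow]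
          simp
        have h3 : P.coeff n = P.leadingCoeff := by rw [← hn, coeff_natDegree]
        have hne : ((n : ℝ) + 1) * c ≠ 0 := mul_ne_zero (by positivity) hc
        rw [hRdef]
        simp only [coeff_sub, h1, h2, h3, sub_zero]
        rw [hb, show ((n:ℝ)+1)*c = c*(n+1) by ring, div_mul_cancel₀ _ (by rwa [mul_comm] at hne), sub_self]
      · -- k > n
        have hPk : P.coeff k = 0 := coeff_eq_zero_of_natDegree_lt (by omega)
        rcases eq_or_lt_of_le (Nat.succ_le_of_lt hk') with hk2 | hk2
        · -- k = n + 1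
          have h1 : (Q₀.comp (X + C c)).coeff k = b := by
            rw [hcomp, coeff_C_mul, coeff_X_add_C_pow, ← hk2]
            simp
          have h2 : Q₀.coeff k = b := by
            rw [hQ₀, coeff_C_mul, coeff_X_pow, ← hk2]
            simp
          simp [hRdef, h1, h2, hPk]
        · -- k > n + 1
          have h1 : (Q₀.comp (X + C c)).coeff k = 0 := by
            rw [hcomp, coeff_C_mul, coeff_X_add_C_pow]
            rw [Nat.choose_eq_zero_of_lt hk2]
            simp
          have h2 : Q₀.coeff k = 0 := by
            rw [hQ₀, coeff_C_mul, coeff_X_pow]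
            simp [Nat.ne_of_lt' hk2]
          simp [hRdef, h1, h2, hPk]
    rcases eq_or_ne R 0 with hR0 | hR0
    · refine ⟨Q₀, ?_⟩
      have h0 : R = 0 := hR0
      rw [hRdef] at h0
      linear_combination -h0
    · have hRdeg : R.natDegree < n := by
        by_contra h
        push_neg at h
        exact hR0 (leadingCoeff_eq_zero.mp (hcoeff _ h) )
      obtain ⟨Q₁, hQ₁⟩ := ih R.natDegree hRdeg R rfl
      refine ⟨Q₀ + Q₁, ?_⟩
      rw [add_comp]
      have hRd : R = P - (Q₀.comp (X + C c) - Q₀) := hRdef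
      linear_combination hQ₁ + hRd

/-- if `f : ℝ → ℝ` is continuous, `c ≠ 0`, and `x ↦ f(x + c) − f(x)` is a
polynomial function, then `f` is the sum of a continuous `c`-periodic function and a polynomial
function. -/
theorem continuous_eq_periodic_add_polynomial
    (f : ℝ → ℝ) (hf : Continuous f) (c : ℝ) (hc : c ≠ 0)
    (hpoly : ∃ P : Polynomial ℝ, ∀ x : ℝ, f (x + c) - f x = P.eval x) :
    ∃ (Q : Polynomial ℝ) (g : ℝ → ℝ), Continuous g ∧ (∀ x : ℝ, g (x + c) = g x) ∧
      ∀ x : ℝ, f x = g x + Q.eval x := by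
  obtain ⟨P, hP⟩ := hpoly
  obtain ⟨Q, hQ⟩ := shift_exists c hc P
  refine ⟨Q, fun x => f x - Q.eval x, hf.sub (Q.continuous), fun x => ?_, fun x => by simp⟩
  have h1 : Q.eval (x + c) - Q.eval x = P.eval x := by
    rw [← hQ]; simp [eval_comp]
  have h2 := hP x
  simp only []
  linarith
end

section
/- Let d ≥ 2 and let f : ℝ^d → ℝ be continuously differentiable and Lebesgue integrable, and suppose there exists C > 0 such that (1 + ‖x‖^d) ‖∇f(x)‖ ≤ C for all x ∈ ℝ^d. Assume furthermore that for every s ∈ ℝ the slice y ↦ f(s, y) is Lebesgue integrable on ℝ^{d−1}. Then the marginal function f̄ : ℝ → ℝ defined by f̄(s) = ∫_{ℝ^{d−1}} f(s, y) dy is globally Lipschitz; in fact it is K-Lipschitz with K = ∫_{ℝ^{d−1}} C/(1 + ‖y‖^d) dy, and this integral is finite. -/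
open MeasureTheory

noncomputable section

lemma aux_norm_gradient {n : ℕ} (f : EuclideanSpace ℝ (Fin n) → ℝ) (x : EuclideanSpace ℝ (Fin n)) :
    ‖gradient f x‖ = ‖fderiv ℝ f x‖ := by
  unfold gradient
  exact LinearIsometryEquiv.norm_map _ _

lemma aux_norm_le_cons {m : ℕ} (s : ℝ) (y : EuclideanSpace ℝ (Fin m))
    (x : EuclideanSpace ℝ (Fin (m + 1))) (hx : ∀ i, x i = (Fin.cons s y : Fin (m + 1) → ℝ) i) : ‖y‖ ≤ ‖x‖ := by
  rw [EuclideanSpace.norm_eq y, EuclideanSpace.norm_eq x]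
  apply Real.sqrt_le_sqrt
  rw [Fin.sum_univ_succ]
  simp only [hx, Fin.cons_zero, Fin.cons_succ]
  have : (0:ℝ) ≤ ‖s‖ ^ 2 := sq_nonneg _
  linarith

lemma aux_grad_bound {m : ℕ} (f : EuclideanSpace ℝ (Fin (m + 1)) → ℝ) (C : ℝ) (hC : 0 < C)
    (hgrad : ∀ x : EuclideanSpace ℝ (Fin (m + 1)), (1 + ‖x‖ ^ (m + 1)) * ‖gradient f x‖ ≤ C)
    (x : EuclideanSpace ℝ (Fin (m + 1))) (r : ℝ) (hr : 0 ≤ r) (hrx : r ≤ ‖x‖) :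
    ‖gradient f x‖ ≤ C / (1 + r ^ (m + 1)) := by
  have h1 : (0:ℝ) < 1 + r ^ (m + 1) := by positivity
  have h2 : (0:ℝ) < 1 + ‖x‖ ^ (m + 1) := by positivity
  have h3 : ‖gradient f x‖ ≤ C / (1 + ‖x‖ ^ (m + 1)) := by
    rw [le_div_iff₀ h2, mul_comm]; exact hgrad x
  refine h3.trans ?_
  apply div_le_div_of_nonneg_left hC.le h1
  have := pow_le_pow_left₀ hr hrx (m + 1)
  linarith

set_option maxHeartbeats 1000000 in
/-- for `d = m + 1 ≥ 2`, if `f : ℝ^d → ℝ` is `C¹`, integrable, with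
`(1 + ‖x‖^d)‖∇f(x)‖ ≤ C`, and every slice `y ↦ f(s, y)` is integrable, then the marginal
`f̄(s) = ∫ f(s, y) dy` is globally Lipschitz with constant `K = ∫ C/(1 + ‖y‖^d) dy`, and this
integral is finite. -/
theorem marginal_lipschitz_of_gradient_decay
    (m : ℕ) (hm : 1 ≤ m)
    (f : EuclideanSpace ℝ (Fin (m + 1)) → ℝ)
    (hC1 : ContDiff ℝ 1 f)
    (hint : Integrable f)
    (C : ℝ) (hC : 0 < C)
    (hgrad : ∀ x : EuclideanSpace ℝ (Fin (m + 1)), (1 + ‖x‖ ^ (m + 1)) * ‖gradient f x‖ ≤ C)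
    (hslice : ∀ s : ℝ,
      Integrable (fun y : EuclideanSpace ℝ (Fin m) => f (WithLp.toLp 2 (Fin.cons s (WithLp.ofLp y))))) :
    Integrable (fun y : EuclideanSpace ℝ (Fin m) => C / (1 + ‖y‖ ^ (m + 1))) ∧
    ∀ s₁ s₂ : ℝ,
      |(∫ y : EuclideanSpace ℝ (Fin m), f (WithLp.toLp 2 (Fin.cons s₁ (WithLp.ofLp y)))) -
          ∫ y : EuclideanSpace ℝ (Fin m), f (WithLp.toLp 2 (Fin.cons s₂ (WithLp.ofLp y)))|
        ≤ (∫ y : EuclideanSpace ℝ (Fin m), C / (1 + ‖y‖ ^ (m + 1))) * |s₁ - s₂| := by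
  -- positivity of denominators
  have hden : ∀ y : EuclideanSpace ℝ (Fin m), (0:ℝ) < 1 + ‖y‖ ^ (m + 1) := fun y => by
    positivity
  -- integrability of the bound
  have hB : Integrable (fun y : EuclideanSpace ℝ (Fin m) => C / (1 + ‖y‖ ^ (m + 1))) := by
    have hnr : (Module.finrank ℝ (EuclideanSpace ℝ (Fin m)) : ℝ) < (m + 1 : ℝ) := by
      simp [finrank_euclideanSpace]
    have h1 : Integrable (fun y : EuclideanSpace ℝ (Fin m) => (1 + ‖y‖) ^ (-(m + 1 : ℝ))) :=
      integrable_one_add_norm hnr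
    refine ((h1.const_mul (C * 2 ^ (m+1))).mono' ?_ (Filter.Eventually.of_forall fun y => ?_))
    · apply Continuous.aestronglyMeasurable
      exact continuous_const.div (by continuity) (fun y => (hden y).ne')
    · have hpos : (0:ℝ) < (1 + ‖y‖) := by positivity
      have h2 : (1 + ‖y‖) ^ (m + 1) ≤ 2 ^ (m + 1) * (1 + ‖y‖ ^ (m + 1)) := by
        rcases le_total (‖y‖) 1 with h | h
        · calc (1 + ‖y‖) ^ (m + 1) ≤ 2 ^ (m + 1) := by
                apply pow_le_pow_left₀ (by positivity) (by linarith)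
          _ ≤ 2 ^ (m + 1) * (1 + ‖y‖ ^ (m + 1)) := by
                nlinarith [pow_nonneg (norm_nonneg y) (m+1),
                  pow_pos (show (0:ℝ) < 2 by norm_num) (m+1)]
        · calc (1 + ‖y‖) ^ (m + 1) ≤ (2 * ‖y‖) ^ (m + 1) := by
                apply pow_le_pow_left₀ (by positivity) (by linarith)
          _ = 2 ^ (m + 1) * ‖y‖ ^ (m + 1) := by ring
          _ ≤ 2 ^ (m + 1) * (1 + ‖y‖ ^ (m + 1)) := by
                nlinarith [pow_pos (show (0:ℝ) < 2 by norm_num) (m+1)]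
      have hval : (1 + ‖y‖) ^ (-(m + 1 : ℝ)) = ((1 + ‖y‖) ^ (m + 1) : ℝ)⁻¹ := by
        rw [Real.rpow_neg hpos.le, ← Real.rpow_natCast (1 + ‖y‖) (m + 1)]
        push_cast
        rfl
      rw [Real.norm_eq_abs, abs_of_pos (div_pos hC (hden y)), hval, ← div_eq_mul_inv,
        div_le_div_iff₀ (hden y) (by positivity)]
      nlinarith [mul_le_mul_of_nonneg_left h2 hC.le]
  refine ⟨hB, fun s₁ s₂ => ?_⟩
  -- pointwise Lipschitz bound on slices
  set v : EuclideanSpace ℝ (Fin (m + 1)) := EuclideanSpace.single 0 1 with hv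
  have hvnorm : ‖v‖ = 1 := by simp [hv, EuclideanSpace.norm_single]
  have hptwise : ∀ y : EuclideanSpace ℝ (Fin m),
      |f (WithLp.toLp 2 (Fin.cons s₁ (WithLp.ofLp y))) - f (WithLp.toLp 2 (Fin.cons s₂ (WithLp.ofLp y)))| ≤ (C / (1 + ‖y‖ ^ (m + 1))) * |s₁ - s₂| := by
    intro y
    obtain ⟨c, hc⟩ : ∃ c : EuclideanSpace ℝ (Fin (m + 1)),
        ∀ t : ℝ, c + t • v = (WithLp.toLp 2 (Fin.cons t (WithLp.ofLp y)) : EuclideanSpace ℝ (Fin (m + 1))) := by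
      refine ⟨WithLp.toLp 2 (Fin.cons 0 (WithLp.ofLp y)), fun t => ?_⟩
      ext i
      refine Fin.cases ?_ (fun j => ?_) i <;>
        simp [hv, PiLp.add_apply, PiLp.smul_apply, EuclideanSpace.single_apply,
          Fin.succ_ne_zero]
    set g : ℝ → ℝ := fun s => f (WithLp.toLp 2 (Fin.cons s (WithLp.ofLp y))) with hg
    have hderiv : ∀ s : ℝ, HasDerivAt g (fderiv ℝ f (WithLp.toLp 2 (Fin.cons s (WithLp.ofLp y))) v) s := by
      intro s
      have h1 : HasDerivAt (fun t : ℝ => c + t • v) v s := by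
        simpa using ((hasDerivAt_id s).smul_const v).const_add c
      have hd := ((hC1.differentiable one_ne_zero (c + s • v)).hasFDerivAt).comp_hasDerivAt s h1
      simp only [Function.comp, hc] at hd
      exact hd
    have hbound : ∀ s : ℝ, ‖fderiv ℝ f (WithLp.toLp 2 (Fin.cons s (WithLp.ofLp y))) v‖ ≤ C / (1 + ‖y‖ ^ (m + 1)) := by
      intro s
      calc ‖fderiv ℝ f (WithLp.toLp 2 (Fin.cons s (WithLp.ofLp y))) v‖ ≤ ‖fderiv ℝ f (WithLp.toLp 2 (Fin.cons s (WithLp.ofLp y)))‖ * ‖v‖ :=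
            ContinuousLinearMap.le_opNorm _ v
        _ = ‖gradient f (WithLp.toLp 2 (Fin.cons s (WithLp.ofLp y)))‖ := by rw [hvnorm, mul_one, aux_norm_gradient]
        _ ≤ C / (1 + ‖y‖ ^ (m + 1)) :=
            aux_grad_bound f C hC hgrad _ ‖y‖ (norm_nonneg y)
              (aux_norm_le_cons s y _ fun i => rfl)
    have := Convex.norm_image_sub_le_of_norm_hasDerivWithin_le
      (f := g) (f' := fun s => fderiv ℝ f (WithLp.toLp 2 (Fin.cons s (WithLp.ofLp y))) v) (s := Set.univ)
      (fun x _ => (hderiv x).hasDerivWithinAt) (fun x _ => hbound x) convex_univ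
      (Set.mem_univ s₂) (Set.mem_univ s₁)
    simpa [Real.norm_eq_abs] using this
  -- integrate the pointwise bound
  rw [← integral_sub (hslice s₁) (hslice s₂)]
  have h := norm_integral_le_of_norm_le (μ := volume)
    (f := fun y : EuclideanSpace ℝ (Fin m) => f (WithLp.toLp 2 (Fin.cons s₁ (WithLp.ofLp y))) - f (WithLp.toLp 2 (Fin.cons s₂ (WithLp.ofLp y))))
    (g := fun y : EuclideanSpace ℝ (Fin m) => (C / (1 + ‖y‖ ^ (m + 1))) * |s₁ - s₂|)
    (hB.mul_const _) (Filter.Eventually.of_forall fun y => by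
      simpa [Real.norm_eq_abs] using hptwise y)
  rw [integral_mul_const] at h
  simpa [Real.norm_eq_abs] using h
end
end
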